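/- arXiv:2006.02248 — 8 statements merged into one kernel-verified Lean document; each statement's English description precedes it below -/
import Mathlib

section
/- Let A be a g-tuple of d×d real symmetric matrices, X ∈ D_A(n), β ∈ M_{n×1}(ℝ)^g, and γ ∈ ℝ^g. If the dilation Y given by Y_i = [[X_i, β_i],[β_i^T, γ_i]] (an (n+1)×(n+1) symmetric tuple) satisfies L_A(Y) ⪰ 0, then ker L_A(X) ⊆ ker Λ_A(β^T), where Λ_A(β^T) = Σ_i A_i ⊗ β_i^T. -/
open Matrix
open scoped Kronecker

/-- The monic linear pencil `L_A(X) = I - Σ_i A_i ⊗ X_i`. -/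
noncomputable def LA {g : ℕ} {D m : Type*} [Fintype D] [Fintype m] [DecidableEq D] [DecidableEq m]
    (A : Fin g → Matrix D D ℝ) (X : Fin g → Matrix m m ℝ) :
    Matrix (D × m) (D × m) ℝ :=
  1 - ∑ i, A i ⊗ₖ X i

/-- Membership of the symmetric tuple `X` in the free spectrahedron `D_A`. -/
def InDA {g : ℕ} {D m : Type*} [Fintype D] [Fintype m] [DecidableEq D] [DecidableEq m]
    (A : Fin g → Matrix D D ℝ) (X : Fin g → Matrix m m ℝ) : Prop :=
  (∀ i, (X i).IsSymm) ∧ (LA A X).PosSemidef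

/-- if the one-dimensional dilation `[[X,β],[βᵀ,γ]]` satisfies
`L_A(Y) ⪰ 0`, then `ker L_A(X) ⊆ ker Λ_A(βᵀ)`. -/
theorem dilation_kernel_containment {g d n : ℕ}
    (A : Fin g → Matrix (Fin d) (Fin d) ℝ) (hA : ∀ i, (A i).IsSymm)
    (X : Fin g → Matrix (Fin n) (Fin n) ℝ) (hX : InDA A X)
    (β : Fin g → Matrix (Fin n) (Fin 1) ℝ) (γ : Fin g → ℝ)
    (hY : (LA A (fun i => Matrix.fromBlocks (X i) (β i) (β i)ᵀ
        (γ i • (1 : Matrix (Fin 1) (Fin 1) ℝ)))).PosSemidef) :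
    LinearMap.ker (LA A X).mulVecLin ≤
      LinearMap.ker (∑ i, A i ⊗ₖ (β i)ᵀ).mulVecLin := by
  intro v hv
  simp only [LinearMap.mem_ker, Matrix.mulVecLin_apply] at hv ⊢
  set M := LA A (fun i => Matrix.fromBlocks (X i) (β i) (β i)ᵀ
      (γ i • (1 : Matrix (Fin 1) (Fin 1) ℝ))) with hM
  set u0 : Fin d × (Fin n ⊕ Fin 1) → ℝ :=
    fun p => Sum.elim (fun a => v (p.1, a)) (fun _ => 0) p.2 with hu0
  have hmul : M *ᵥ u0 = fun p => Sum.elim (fun a => ((LA A X) *ᵥ v) (p.1, a))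
      (fun b => -(((∑ i, A i ⊗ₖ (β i)ᵀ) *ᵥ v) (p.1, b))) p.2 := by
    funext p
    obtain ⟨i, c⟩ := p
    cases c with
    | inl a =>
      simp only [hM, hu0, LA, mulVec, dotProduct, Matrix.sub_apply, Matrix.one_apply,
        Matrix.sum_apply, kroneckerMap_apply, Fintype.sum_prod_type, Fintype.sum_sum_type,
        Sum.elim_inl, Sum.elim_inr, mul_zero, Finset.sum_const_zero, add_zero,
        fromBlocks_apply₁₁, Prod.mk.injEq, Sum.inl.injEq]
    | inr b =>
      simp only [hM, hu0, LA, mulVec, dotProduct, Matrix.sub_apply, Matrix.one_apply,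
        Matrix.sum_apply, kroneckerMap_apply, Fintype.sum_prod_type, Fintype.sum_sum_type,
        Sum.elim_inl, Sum.elim_inr, mul_zero, Finset.sum_const_zero, add_zero,
        fromBlocks_apply₂₁, Matrix.transpose_apply, Prod.mk.injEq, reduceCtorEq, and_false,
        if_false, zero_sub, neg_mul, Finset.sum_neg_distrib]
  have hq : star u0 ⬝ᵥ M *ᵥ u0 = 0 := by
    rw [hmul]
    simp [dotProduct, Fintype.sum_prod_type, Fintype.sum_sum_type, hu0, hv]
  have h0 := (hY.dotProduct_mulVec_zero_iff u0).mp hq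
  rw [hmul] at h0
  funext p
  obtain ⟨i, b⟩ := p
  have := congrFun h0 (i, Sum.inr b)
  simpa using this
end

section
/- Let A be a g-tuple of d×d real symmetric matrices and X ∈ D_A(n). Suppose β ∈ M_{n×1}(ℝ)^g satisfies ker L_A(X) ⊆ ker Λ_A(β^T). Then taking γ = 0, there exists a real number c > 0 such that the dilation Y with blocks Y_i = [[X_i, cβ_i],[cβ_i^T, 0]] satisfies L_A(Y) ⪰ 0; in particular, if β ≠ 0 then X is not an Arveson extreme point of D_A. -/
open Matrix
open scoped Kronecker

/-- `X` is an Arveson extreme point of `D_A`: every dilation `[[X,β],[βᵀ,γ]] ∈ D_A`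
forces `β = 0`. -/
def IsArvExt {g d n : ℕ} (A : Fin g → Matrix (Fin d) (Fin d) ℝ)
    (X : Fin g → Matrix (Fin n) (Fin n) ℝ) : Prop :=
  InDA A X ∧ ∀ (k : ℕ) (β : Fin g → Matrix (Fin n) (Fin k) ℝ)
    (γ : Fin g → Matrix (Fin k) (Fin k) ℝ),
      InDA A (fun i => Matrix.fromBlocks (X i) (β i) (β i)ᵀ (γ i)) → β = 0


lemma key_quad {N K : Type*} [Fintype N] [DecidableEq N] [Fintype K]
    (L : Matrix N N ℝ) (hL : L.PosSemidef) (Λ : Matrix K N ℝ)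
    (hker : ∀ x : N → ℝ, L *ᵥ x = 0 → Λ *ᵥ x = 0) :
    ∃ t : ℝ, 0 < t ∧ (L - t • (Λᵀ * Λ)).PosSemidef := by
  have hH := hL.1
  set U : Matrix N N ℝ := (hH.eigenvectorUnitary : Matrix N N ℝ) with hU
  set μ : N → ℝ := hH.eigenvalues with hμ
  have hμ0 : ∀ i, 0 ≤ μ i := fun i => hL.eigenvalues_nonneg i
  set B : Matrix K N ℝ := Λ * U with hB
  have hsU : star U = Uᵀ := by
    ext i j; simp [Matrix.star_apply]
  -- columns of B with zero eigenvalue vanish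
  have hBcol : ∀ i, μ i = 0 → ∀ j, B j i = 0 := by
    intro i hi j
    have h1 : L *ᵥ ⇑(hH.eigenvectorBasis i) = 0 := by
      rw [hH.mulVec_eigenvectorBasis i]
      simp [← hμ, hi]
    have h2 := hker _ h1
    have : B j i = (Λ *ᵥ ⇑(hH.eigenvectorBasis i)) j := by
      simp [hB, Matrix.mul_apply, Matrix.mulVec, dotProduct, hU]
    rw [this, h2]; rfl
  set s : ℝ := ∑ j : K, ∑ i : N, (if μ i = 0 then 0 else (B j i / Real.sqrt (μ i)) ^ 2) with hs
  have hs0 : 0 ≤ s := by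
    apply Finset.sum_nonneg; intro j _
    apply Finset.sum_nonneg; intro i _
    split <;> positivity
  refine ⟨1 / (s + 1), by positivity, ?_⟩
  have hM : (Λᵀ * Λ).IsHermitian := by simpa using isHermitian_conjTranspose_mul_self Λ
  refine Matrix.PosSemidef.of_dotProduct_mulVec_nonneg ?_ ?_
  · refine hL.1.sub ?_
    show _ = _
    rw [Matrix.conjTranspose_smul, hM.eq]
    simp
  intro x
  have hQnn : (0:ℝ) ≤ x ⬝ᵥ L *ᵥ x := by simpa using hL.dotProduct_mulVec_nonneg x
  -- reduce to quadratic inequality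
  have key : (1 / (s + 1)) * (x ⬝ᵥ (Λᵀ * Λ) *ᵥ x) ≤ x ⬝ᵥ L *ᵥ x := by
    set y : N → ℝ := star U *ᵥ x with hy
    have hxy : U *ᵥ y = x := by
      rw [hy, Matrix.mulVec_mulVec]
      rw [show (U : Matrix N N ℝ) * star (U : Matrix N N ℝ) = 1 from
        Matrix.mem_unitaryGroup_iff.mp (hH.eigenvectorUnitary).2]
      simp
    have hyT : Uᵀ *ᵥ x = y := by rw [hy, hsU]
    have hQ : x ⬝ᵥ L *ᵥ x = ∑ i, μ i * y i ^ 2 := by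
      have h1 : L *ᵥ x = U *ᵥ (Matrix.diagonal (RCLike.ofReal ∘ μ) *ᵥ y) := by
        conv_lhs => rw [hH.spectral_theorem, Unitary.conjStarAlgAut_apply]
        rw [← Matrix.mulVec_mulVec, ← Matrix.mulVec_mulVec, ← hy]
      rw [h1, Matrix.dotProduct_mulVec x U, ← Matrix.mulVec_transpose, hyT]
      simp [Matrix.mulVec_diagonal, dotProduct]
      apply Finset.sum_congr rfl
      intro i _
      ring
    have hΛ : x ⬝ᵥ (Λᵀ * Λ) *ᵥ x = ∑ j, (∑ i, B j i * y i) ^ 2 := by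
      have h3 : Λ *ᵥ x = B *ᵥ y := by rw [← hxy, hB, Matrix.mulVec_mulVec]
      rw [← Matrix.mulVec_mulVec, Matrix.dotProduct_mulVec, Matrix.vecMul_transpose, h3]
      simp [Matrix.mulVec, dotProduct, pow_two]
    have hCS : ∀ j : K, (∑ i, B j i * y i) ^ 2
        ≤ (∑ i, (if μ i = 0 then 0 else (B j i / Real.sqrt (μ i)) ^ 2))
          * (∑ i, μ i * y i ^ 2) := by
      intro j
      have h := Finset.sum_mul_sq_le_sq_mul_sq Finset.univ
        (fun i => if μ i = 0 then 0 else B j i / Real.sqrt (μ i))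
        (fun i => if μ i = 0 then 0 else Real.sqrt (μ i) * y i)
      have e1 : ∀ i : N, (if μ i = 0 then 0 else B j i / Real.sqrt (μ i))
          * (if μ i = 0 then 0 else Real.sqrt (μ i) * y i) = B j i * y i := by
        intro i
        by_cases hi : μ i = 0
        · simp [hi, hBcol i hi j]
        · have hpos : 0 < μ i := lt_of_le_of_ne (hμ0 i) (Ne.symm hi)
          have hsq : Real.sqrt (μ i) ≠ 0 := by positivity
          simp only [hi, if_false]
          field_simp
      have e2 : ∀ i : N, (if μ i = 0 then 0 else Real.sqrt (μ i) * y i) ^ 2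
          = μ i * y i ^ 2 := by
        intro i
        by_cases hi : μ i = 0
        · simp [hi]
        · simp only [hi, if_false, mul_pow, Real.sq_sqrt (hμ0 i)]
      calc (∑ i, B j i * y i) ^ 2
          = (∑ i, (if μ i = 0 then 0 else B j i / Real.sqrt (μ i))
            * (if μ i = 0 then 0 else Real.sqrt (μ i) * y i)) ^ 2 := by
            congr 1; exact (Finset.sum_congr rfl fun i _ => e1 i).symm
        _ ≤ (∑ i, (if μ i = 0 then 0 else B j i / Real.sqrt (μ i)) ^ 2)
            * (∑ i, (if μ i = 0 then 0 else Real.sqrt (μ i) * y i) ^ 2) := h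
        _ = _ := by
            rw [Finset.sum_congr rfl fun i _ => e2 i]
            congr 1
            exact Finset.sum_congr rfl fun i _ => by split <;> simp
    have hsum : x ⬝ᵥ (Λᵀ * Λ) *ᵥ x ≤ s * (x ⬝ᵥ L *ᵥ x) := by
      rw [hΛ, hQ, hs, Finset.sum_mul]
      exact Finset.sum_le_sum fun j _ => hCS j
    have hts : (1 / (s + 1)) * s ≤ 1 := by
      rw [div_mul_eq_mul_div, one_mul, div_le_one (by linarith)]; linarith
    calc (1 / (s + 1)) * (x ⬝ᵥ (Λᵀ * Λ) *ᵥ x)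
        ≤ (1 / (s + 1)) * (s * (x ⬝ᵥ L *ᵥ x)) := by
          apply mul_le_mul_of_nonneg_left hsum (by positivity)
      _ = ((1 / (s + 1)) * s) * (x ⬝ᵥ L *ᵥ x) := by ring
      _ ≤ 1 * (x ⬝ᵥ L *ᵥ x) := mul_le_mul_of_nonneg_right hts hQnn
      _ = _ := one_mul _
  have expand : star x ⬝ᵥ (L - (1 / (s + 1)) • (Λᵀ * Λ)) *ᵥ x
      = x ⬝ᵥ L *ᵥ x - (1 / (s + 1)) * (x ⬝ᵥ (Λᵀ * Λ) *ᵥ x) := by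
    simp [Matrix.sub_mulVec, Matrix.smul_mulVec, dotProduct_sub, dotProduct_smul,
      smul_eq_mul]
  rw [expand]
  linarith

/-- if `ker L_A(X) ⊆ ker Λ_A(βᵀ)` then, taking `γ = 0`, there is `c > 0`
with `[[X, cβ],[cβᵀ, 0]] ∈ D_A`; in particular if `β ≠ 0` then `X` is not Arveson extreme. -/
theorem kernel_containment_gives_dilation {g d n : ℕ}
    (A : Fin g → Matrix (Fin d) (Fin d) ℝ) (hA : ∀ i, (A i).IsSymm)
    (X : Fin g → Matrix (Fin n) (Fin n) ℝ) (hX : InDA A X)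
    (β : Fin g → Matrix (Fin n) (Fin 1) ℝ)
    (hker : LinearMap.ker (LA A X).mulVecLin ≤
      LinearMap.ker (∑ i, A i ⊗ₖ (β i)ᵀ).mulVecLin) :
    (∃ c : ℝ, 0 < c ∧
      InDA A (fun i => Matrix.fromBlocks (X i) (c • β i) (c • β i)ᵀ
        (0 : Matrix (Fin 1) (Fin 1) ℝ))) ∧
    (β ≠ 0 → ¬ IsArvExt A X) := by
  set L := LA A X with hLdef
  set Λ : Matrix (Fin d × Fin 1) (Fin d × Fin n) ℝ := ∑ i, A i ⊗ₖ (β i)ᵀ with hΛdef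
  have hker' : ∀ x : (Fin d × Fin n) → ℝ, L *ᵥ x = 0 → Λ *ᵥ x = 0 := by
    intro x hx
    have : x ∈ LinearMap.ker L.mulVecLin := by
      rw [LinearMap.mem_ker, Matrix.mulVecLin_apply]; exact hx
    have := hker this
    rwa [LinearMap.mem_ker, Matrix.mulVecLin_apply] at this
  obtain ⟨t, ht, hpsd⟩ := key_quad L hX.2 Λ hker'
  set c := Real.sqrt t with hc
  have hc0 : 0 < c := Real.sqrt_pos.mpr ht
  have hcc : c * c = t := Real.mul_self_sqrt ht.le
  have main : InDA A (fun i => Matrix.fromBlocks (X i) (c • β i) (c • β i)ᵀ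
      (0 : Matrix (Fin 1) (Fin 1) ℝ)) := by
    constructor
    · intro i
      show _ = _
      rw [Matrix.fromBlocks_transpose, (hX.1 i).eq, Matrix.transpose_transpose,
        Matrix.transpose_zero]
    · set Y := fun i => Matrix.fromBlocks (X i) (c • β i) (c • β i)ᵀ
        (0 : Matrix (Fin 1) (Fin 1) ℝ) with hY
      set e : ((Fin d × Fin n) ⊕ (Fin d × Fin 1)) ≃ (Fin d × (Fin n ⊕ Fin 1)) :=
        (Equiv.prodSumDistrib (Fin d) (Fin n) (Fin 1)).symm with he
      set B : Matrix (Fin d × Fin n) (Fin d × Fin 1) ℝ := -(c • Λᵀ) with hBdef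
      have hA' : ∀ (k : Fin g) (i j : Fin d), A k i j = A k j i := by
        intro k i j
        conv_lhs => rw [← (hA k).eq]
        rfl
      have hblock : (LA A Y).submatrix e e = Matrix.fromBlocks L B Bᴴ 1 := by
        ext p q
        rcases p with ⟨i, a⟩ | ⟨i, a⟩ <;> rcases q with ⟨j, b⟩ | ⟨j, b⟩ <;>
          simp [LA, hY, hBdef, hΛdef, hLdef, he, Matrix.sub_apply, Matrix.sum_apply,
            Matrix.one_apply, Prod.ext_iff, Matrix.conjTranspose_apply,
            Equiv.prodSumDistrib_symm_apply_left, Equiv.prodSumDistrib_symm_apply_right,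
            Finset.mul_sum, mul_comm, mul_left_comm, mul_assoc, hA']
      rw [← Matrix.posSemidef_submatrix_equiv e, hblock]
      haveI : Invertible (1 : Matrix (Fin d × Fin 1) (Fin d × Fin 1) ℝ) := invertibleOne
      rw [Matrix.PosDef.fromBlocks₂₂ L B Matrix.PosDef.one]
      have : B * (1 : Matrix (Fin d × Fin 1) (Fin d × Fin 1) ℝ)⁻¹ * Bᴴ
          = t • (Λᵀ * Λ) := by
        rw [inv_one, Matrix.mul_one, hBdef]
        have hct : (-(c • Λᵀ))ᴴ = -(c • Λ) := by
          ext p q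
          simp [Matrix.conjTranspose_apply]
        rw [hct]
        rw [Matrix.neg_mul, Matrix.mul_neg, neg_neg, Matrix.smul_mul, Matrix.mul_smul,
          smul_smul, hcc]
      rw [this]
      exact hpsd
  refine ⟨⟨c, hc0, main⟩, ?_⟩
  intro hβ hArv
  have h0 := hArv.2 1 (fun i => c • β i) 0 main
  apply hβ
  funext i
  have := congrFun h0 i
  simp only [Pi.zero_apply] at this
  have : c • β i = 0 := this
  rcases smul_eq_zero.mp this with h | h
  · exact absurd h (ne_of_gt hc0)
  · simp [h]
end

section
/- Let A be a g-tuple of d×d real symmetric matrices and X ∈ D_A(n). Then X is an Arveson extreme point of D_A if and only if the only solution β ∈ M_{n×1}(ℝ)^g of the homogeneous linear system Λ_A(β^T) P_{A,X} = 0 is β = 0, where P_{A,X} is a matrix whose columns form an orthonormal basis for ker L_A(X). -/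
open Matrix
open scoped Kronecker

section Helpers

lemma symm_mulVec_dot {ι : Type*} [Fintype ι] (S : Matrix ι ι ℝ) (hS : S.IsSymm)
    (u v : ι → ℝ) : (S *ᵥ u) ⬝ᵥ v = u ⬝ᵥ (S *ᵥ v) := by
  rw [dotProduct_mulVec, ← mulVec_transpose, hS.eq, dotProduct_comm]

lemma solve_symm {ι : Type*} [Fintype ι] [DecidableEq ι] (S : Matrix ι ι ℝ) (hS : S.IsSymm)
    (b : ι → ℝ) (hb : ∀ v, S *ᵥ v = 0 → b ⬝ᵥ v = 0) : ∃ w, S *ᵥ w = b := by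
  classical
  set f : EuclideanSpace ℝ ι →ₗ[ℝ] EuclideanSpace ℝ ι := Matrix.toEuclideanLin S with hf
  have hfap : ∀ v : EuclideanSpace ℝ ι,
      f v = (WithLp.equiv 2 (ι → ℝ)).symm (S *ᵥ (WithLp.equiv 2 (ι → ℝ)) v) :=
    fun v => Matrix.toEuclideanLin_apply S v
  have hinner : ∀ x y : EuclideanSpace ℝ ι,
      (inner ℝ x y : ℝ) = (WithLp.equiv 2 (ι → ℝ)) x ⬝ᵥ (WithLp.equiv 2 (ι → ℝ)) y := by
    intro x y
    simp [PiLp.inner_apply, dotProduct, RCLike.inner_apply, mul_comm]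
  have hsym : ∀ u v : EuclideanSpace ℝ ι, (inner ℝ (f u) v : ℝ) = inner ℝ u (f v) := by
    intro u v
    rw [hinner, hinner, hfap, hfap]
    simp only [Equiv.apply_symm_apply]
    exact symm_mulVec_dot S hS _ _
  have horth : (LinearMap.range f)ᗮ = LinearMap.ker f := by
    ext v
    constructor
    · intro hv
      have h2 : (inner ℝ (f v) (f v) : ℝ) = 0 := by
        rw [hsym, real_inner_comm]
        exact (Submodule.mem_orthogonal _ v).mp hv (f (f v)) ⟨f v, rfl⟩
      simpa [LinearMap.mem_ker] using inner_self_eq_zero.mp h2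
    · intro hv
      rw [Submodule.mem_orthogonal]
      rintro u ⟨w, rfl⟩
      rw [hsym]
      simp [LinearMap.mem_ker.mp hv]
  have hrange : LinearMap.range f = (LinearMap.ker f)ᗮ := by
    rw [← horth, Submodule.orthogonal_orthogonal]
  have hbmem : (WithLp.equiv 2 (ι → ℝ)).symm b ∈ (LinearMap.ker f)ᗮ := by
    rw [Submodule.mem_orthogonal]
    intro u hu
    rw [real_inner_comm, hinner]
    simp only [Equiv.apply_symm_apply]
    apply hb
    have h := LinearMap.mem_ker.mp hu
    rw [hfap] at h
    have h2 := congrArg (WithLp.equiv 2 (ι → ℝ)) h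
    simpa using h2
  rw [← hrange] at hbmem
  obtain ⟨w, hw⟩ := hbmem
  refine ⟨(WithLp.equiv 2 (ι → ℝ)) w, ?_⟩
  rw [hfap] at hw
  have h2 := congrArg (WithLp.equiv 2 (ι → ℝ)) hw
  simpa using h2

lemma LA_fromBlocks {g : ℕ} {D m p : Type*} [Fintype D] [Fintype m] [Fintype p]
    [DecidableEq D] [DecidableEq m] [DecidableEq p]
    (A : Fin g → Matrix D D ℝ) (X : Fin g → Matrix m m ℝ)
    (β : Fin g → Matrix m p ℝ) (δ : Fin g → Matrix p m ℝ) (γ : Fin g → Matrix p p ℝ) :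
    LA A (fun i => Matrix.fromBlocks (X i) (β i) (δ i) (γ i)) =
      (Matrix.fromBlocks (LA A X) (-(∑ i, A i ⊗ₖ β i)) (-(∑ i, A i ⊗ₖ δ i)) (LA A γ)).submatrix
        (Equiv.prodSumDistrib D m p) (Equiv.prodSumDistrib D m p) := by
  ext ⟨a, rc⟩ ⟨b, sc⟩
  rcases rc with r | r <;> rcases sc with s | s <;>
    simp [LA, Matrix.sub_apply, Matrix.sum_apply, Matrix.one_apply, Prod.ext_iff,
      Matrix.submatrix_apply, Equiv.prodSumDistrib, Matrix.fromBlocks]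

lemma quad_of_psd {ι κ : Type*} [Fintype ι] [Fintype κ] {L : Matrix ι ι ℝ} {B : Matrix ι κ ℝ}
    {C : Matrix κ ι ℝ} {G : Matrix κ κ ℝ}
    (h : (Matrix.fromBlocks L B C G).PosSemidef) (v : ι → ℝ) (w : κ → ℝ) :
    0 ≤ v ⬝ᵥ (L *ᵥ v) + v ⬝ᵥ (B *ᵥ w) + w ⬝ᵥ (C *ᵥ v) + w ⬝ᵥ (G *ᵥ w) := by
  have h2 := h.dotProduct_mulVec_nonneg (Sum.elim v w)
  simpa [Matrix.fromBlocks_mulVec, sumElim_dotProduct_sumElim, dotProduct_add,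
    add_assoc] using h2

lemma lin_zero {a b : ℝ} (hb : 0 ≤ b) (h : ∀ t : ℝ, 0 ≤ t ^ 2 * b - 2 * t * a) : a = 0 := by
  by_contra ha
  have ha2 : 0 < a ^ 2 := by positivity
  have hb1 : (0:ℝ) < b + 1 := by linarith
  have h1 := h (a / (b + 1))
  have key : (a / (b+1)) ^ 2 * b - 2 * (a / (b+1)) * a =
      (a ^ 2 * b - 2 * a ^ 2 * (b + 1)) / (b + 1) ^ 2 := by
    field_simp
  rw [key] at h1
  have h3 : 0 ≤ a ^ 2 * b - 2 * a ^ 2 * (b + 1) := by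
    rcases div_nonneg_iff.mp h1 with ⟨h4, _⟩ | ⟨_, h5⟩
    · exact h4
    · nlinarith
  nlinarith

lemma cauchy_mulVec {ι κ : Type*} [Fintype ι] [Fintype κ] (W : Matrix ι κ ℝ) (u : ι → ℝ) :
    (Wᵀ *ᵥ u) ⬝ᵥ (Wᵀ *ᵥ u) ≤ (∑ i, ∑ j, (W i j) ^ 2) * (u ⬝ᵥ u) := by
  have hpt : ∀ j, ((Wᵀ *ᵥ u) j) ^ 2 ≤ (∑ i, (W i j) ^ 2) * (u ⬝ᵥ u) := by
    intro j
    have := Finset.sum_mul_sq_le_sq_mul_sq Finset.univ (fun i => W i j) u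
    simpa [Matrix.mulVec, dotProduct, Matrix.transpose_apply, sq] using this
  calc (Wᵀ *ᵥ u) ⬝ᵥ (Wᵀ *ᵥ u) = ∑ j, ((Wᵀ *ᵥ u) j) ^ 2 := by
        simp [dotProduct, sq]
    _ ≤ ∑ j, (∑ i, (W i j) ^ 2) * (u ⬝ᵥ u) := Finset.sum_le_sum fun j _ => hpt j
    _ = (∑ i, ∑ j, (W i j) ^ 2) * (u ⬝ᵥ u) := by rw [← Finset.sum_mul, Finset.sum_comm]

lemma dot_self_nonneg {ι : Type*} [Fintype ι] (y : ι → ℝ) : 0 ≤ y ⬝ᵥ y :=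
  Finset.sum_nonneg fun i _ => mul_self_nonneg _

lemma kron_sum_transpose {g : ℕ} {D m p : Type*} [Fintype D] [Fintype m] [Fintype p]
    (A : Fin g → Matrix D D ℝ) (hA : ∀ i, (A i).IsSymm) (β : Fin g → Matrix m p ℝ) :
    (∑ i, A i ⊗ₖ β i)ᵀ = ∑ i, A i ⊗ₖ (β i)ᵀ := by
  rw [Matrix.transpose_sum]
  refine Finset.sum_congr rfl fun i _ => ?_
  rw [← Matrix.kroneckerMap_transpose, (hA i).eq]

end Helpers

set_option maxHeartbeats 1000000 in
/-- `X` is Arveson extreme iff the homogeneous linear system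
`Λ_A(βᵀ) P_{A,X} = 0` has only the trivial solution. -/
theorem arveson_extreme_iff_linear_system {g d n k : ℕ}
    (A : Fin g → Matrix (Fin d) (Fin d) ℝ) (hA : ∀ i, (A i).IsSymm)
    (X : Fin g → Matrix (Fin n) (Fin n) ℝ) (hX : InDA A X)
    (P : Matrix (Fin d × Fin n) (Fin k) ℝ)
    (hP1 : Pᵀ * P = 1)
    (hP2 : LinearMap.range P.mulVecLin = LinearMap.ker (LA A X).mulVecLin) :
    IsArvExt A X ↔
      ∀ β : Fin g → Matrix (Fin n) (Fin 1) ℝ,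
        (∑ i, A i ⊗ₖ (β i)ᵀ) * P = 0 → β = 0 := by
  classical
  set L : Matrix (Fin d × Fin n) (Fin d × Fin n) ℝ := LA A X with hLdef
  have hL : L.PosSemidef := hX.2
  -- membership in the kernel of L from `hP2`
  have hker_of_range : ∀ v : (Fin d × Fin n) → ℝ, L *ᵥ v = 0 →
      ∃ u : Fin k → ℝ, P *ᵥ u = v := by
    intro v hv
    have : v ∈ LinearMap.ker (LA A X).mulVecLin := by
      simpa [Matrix.mulVecLin_apply, hLdef] using hv
    rw [← hP2] at this
    obtain ⟨u, hu⟩ := this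
    exact ⟨u, by simpa [Matrix.mulVecLin_apply] using hu⟩
  have hrange_ker : ∀ (j : Fin k), L *ᵥ (fun p => P p j) = 0 := by
    intro j
    have hmem : (fun p => P p j) ∈ LinearMap.range P.mulVecLin := by
      refine ⟨Pi.single j 1, ?_⟩
      simp [Matrix.mulVecLin_apply, Matrix.mulVec_single]
      rfl
    rw [hP2] at hmem
    simpa [Matrix.mulVecLin_apply, hLdef] using hmem
  constructor
  · -- Arveson extreme → only trivial solution
    intro hArv β hβ
    set M : Matrix (Fin d × Fin n) (Fin d × Fin 1) ℝ := ∑ i, A i ⊗ₖ β i with hMdef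
    have hMT : Mᵀ = ∑ i, A i ⊗ₖ (β i)ᵀ := kron_sum_transpose A hA β
    have hMTP : Mᵀ * P = 0 := by rw [hMT]; exact hβ
    -- square root of L
    open scoped MatrixOrder in
    set S : Matrix (Fin d × Fin n) (Fin d × Fin n) ℝ := CFC.sqrt L with hSdef
    open scoped MatrixOrder in
    have hSherm : S.IsHermitian := (CFC.sqrt_nonneg L).posSemidef.1
    have hSsym : S.IsSymm := by
      have := hSherm
      rwa [Matrix.IsHermitian, Matrix.conjTranspose_eq_transpose_of_trivial] at this
    open scoped MatrixOrder in
    have hSS : S * S = L := CFC.sqrt_mul_sqrt_self L hL.nonneg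
    have hkerS : ∀ v, L *ᵥ v = 0 → S *ᵥ v = 0 := by
      intro v hv
      have h1 : v ⬝ᵥ (L *ᵥ v) = 0 := by rw [hv]; simp
      have h2 : (S *ᵥ v) ⬝ᵥ (S *ᵥ v) = 0 := by
        rw [symm_mulVec_dot S hSsym, Matrix.mulVec_mulVec, hSS]
        exact h1
      exact dotProduct_self_eq_zero.mp h2
    have hMTker : ∀ v, S *ᵥ v = 0 → Mᵀ *ᵥ v = 0 := by
      intro v hv
      have hLv : L *ᵥ v = 0 := by
        rw [← hSS, ← Matrix.mulVec_mulVec, hv, Matrix.mulVec_zero]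
      obtain ⟨u, hu⟩ := hker_of_range v hLv
      rw [← hu, Matrix.mulVec_mulVec, hMTP, Matrix.zero_mulVec]
    -- solve S * W = M columnwise
    have hcols : ∀ j : Fin d × Fin 1, ∃ w, S *ᵥ w = fun i => M i j := by
      intro j
      apply solve_symm S hSsym
      intro v hv
      have h := hMTker v hv
      have := congrFun h j
      simpa [Matrix.mulVec, dotProduct, Matrix.transpose_apply, mul_comm] using this
    choose W hW using hcols
    set Wm : Matrix (Fin d × Fin n) (Fin d × Fin 1) ℝ := Matrix.of fun i j => W j i with hWmdef
    have hSW : S * Wm = M := by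
      ext i j
      have := congrFun (hW j) i
      simpa [Matrix.mul_apply, Matrix.mulVec, dotProduct, hWmdef] using this
    set cW : ℝ := ∑ i, ∑ j, (Wm i j) ^ 2 with hcWdef
    have hcW0 : 0 ≤ cW := by positivity
    set c : ℝ := 1 / (cW + 1) with hcdef
    have hc : 0 < c := by positivity
    -- the dilation
    have hInDA : InDA A (fun i => Matrix.fromBlocks (X i) (c • β i) (c • β i)ᵀ
        (0 : Matrix (Fin 1) (Fin 1) ℝ)) := by
      constructor
      · intro i
        rw [Matrix.IsSymm, Matrix.fromBlocks_transpose, (hX.1 i).eq, Matrix.transpose_transpose,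
          Matrix.transpose_zero]
      · rw [LA_fromBlocks]
        rw [Matrix.posSemidef_submatrix_equiv]
        have hb1 : (∑ i, A i ⊗ₖ (c • β i)) = c • M := by
          rw [hMdef, Finset.smul_sum]
          exact Finset.sum_congr rfl fun i _ => Matrix.kronecker_smul c (A i) (β i)
        have hb2 : (∑ i, A i ⊗ₖ (c • β i)ᵀ) = c • Mᵀ := by
          have : ∀ i : Fin g, (c • β i)ᵀ = c • (β i)ᵀ := fun i => Matrix.transpose_smul c (β i)
          simp_rw [this]
          rw [hMT, Finset.smul_sum]
          exact Finset.sum_congr rfl fun i _ => Matrix.kronecker_smul c (A i) (β i)ᵀ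
        have hb3 : LA A (fun _ : Fin g => (0 : Matrix (Fin 1) (Fin 1) ℝ)) = 1 := by
          simp [LA]
        rw [hb1, hb2, hb3]
        have hLsym : Lᵀ = L := by
          have hh := hL.1
          rwa [Matrix.IsHermitian, Matrix.conjTranspose_eq_transpose_of_trivial] at hh
        refine Matrix.PosSemidef.of_dotProduct_mulVec_nonneg ?_ ?_
        · -- Hermitian
          rw [Matrix.IsHermitian, Matrix.conjTranspose_eq_transpose_of_trivial,
            Matrix.fromBlocks_transpose, hLsym, Matrix.transpose_neg, Matrix.transpose_neg,
            Matrix.transpose_smul, Matrix.transpose_smul, Matrix.transpose_transpose,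
            Matrix.transpose_one]
        · intro x
          have hx : x = Sum.elim (x ∘ Sum.inl) (x ∘ Sum.inr) := by
            funext z; cases z <;> rfl
          set v : (Fin d × Fin n) → ℝ := x ∘ Sum.inl
          set w : (Fin d × Fin 1) → ℝ := x ∘ Sum.inr
          set u : (Fin d × Fin n) → ℝ := S *ᵥ v with hudef
          set aa : (Fin d × Fin 1) → ℝ := Wmᵀ *ᵥ u with haadef
          have hquad : star x ⬝ᵥ ((Matrix.fromBlocks L (-(c • M)) (-(c • Mᵀ)) 1) *ᵥ x) =
              u ⬝ᵥ u - c * (aa ⬝ᵥ w) - c * (aa ⬝ᵥ w) + w ⬝ᵥ w := by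
            rw [hx]
            rw [Matrix.fromBlocks_mulVec]
            rw [show star (Sum.elim v w) = Sum.elim v w from star_trivial _]
            rw [sumElim_dotProduct_sumElim, dotProduct_add, dotProduct_add]
            simp only [Sum.elim_comp_inl, Sum.elim_comp_inr]
            have e1 : v ⬝ᵥ (L *ᵥ v) = u ⬝ᵥ u := by
              rw [hudef, symm_mulVec_dot S hSsym, Matrix.mulVec_mulVec, hSS]
            have e2 : v ⬝ᵥ ((-(c • M)) *ᵥ w) = -(c * (aa ⬝ᵥ w)) := by
              rw [Matrix.neg_mulVec, dotProduct_neg, Matrix.smul_mulVec,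
                dotProduct_smul]
              congr 1
              rw [← hSW, ← Matrix.mulVec_mulVec, ← symm_mulVec_dot S hSsym, haadef,
                Matrix.mulVec_transpose, Matrix.dotProduct_mulVec, hudef]
              simp [smul_eq_mul]
            have e3 : w ⬝ᵥ ((-(c • Mᵀ)) *ᵥ v) = -(c * (aa ⬝ᵥ w)) := by
              rw [Matrix.neg_mulVec, dotProduct_neg, Matrix.smul_mulVec,
                dotProduct_smul]
              congr 1
              have hMTv : Mᵀ *ᵥ v = aa := by
                rw [← hSW, Matrix.transpose_mul, hSsym.eq, ← Matrix.mulVec_mulVec, ← hudef,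
                  haadef]
              rw [hMTv, dotProduct_comm]
              simp [smul_eq_mul]
            have e4 : w ⬝ᵥ ((1 : Matrix (Fin d × Fin 1) (Fin d × Fin 1) ℝ) *ᵥ w) = w ⬝ᵥ w := by
              rw [Matrix.one_mulVec]
            rw [e1, e2, e3, e4]
            ring
          rw [hquad]
          have hcs : aa ⬝ᵥ aa ≤ cW * (u ⬝ᵥ u) := cauchy_mulVec Wm u
          have hpos : 0 ≤ (c • aa - w) ⬝ᵥ (c • aa - w) := dot_self_nonneg _
          have hexp : (c • aa - w) ⬝ᵥ (c • aa - w) =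
              c ^ 2 * (aa ⬝ᵥ aa) - 2 * c * (aa ⬝ᵥ w) + w ⬝ᵥ w := by
            rw [sub_dotProduct, dotProduct_sub, dotProduct_sub, smul_dotProduct,
              dotProduct_smul, smul_dotProduct, dotProduct_comm w (c • aa),
              smul_dotProduct]
            simp [smul_eq_mul]
            ring
          have huu : 0 ≤ u ⬝ᵥ u := dot_self_nonneg _
          have hc2 : c ^ 2 * cW ≤ 1 := by
            rw [hcdef]
            rw [div_pow, one_pow]
            rw [div_mul_eq_mul_div, div_le_one (by positivity)]
            nlinarith
          nlinarith [hexp ▸ hpos]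
    -- apply extremality
    have hzero := hArv.2 1 (fun i => c • β i) (fun _ => 0) hInDA
    funext i
    have := congrFun hzero i
    have h2 : c • β i = 0 := this
    have := smul_eq_zero.mp h2
    rcases this with h | h
    · exact absurd h (ne_of_gt hc)
    · exact h
  · -- only trivial solution → Arveson extreme
    intro honly
    refine ⟨hX, ?_⟩
    intro k' β γ hDil
    set Mβ : Matrix (Fin d × Fin n) (Fin d × Fin k') ℝ := ∑ i, A i ⊗ₖ β i with hMβdef
    set Mδ : Matrix (Fin d × Fin k') (Fin d × Fin n) ℝ := ∑ i, A i ⊗ₖ (β i)ᵀ with hMδdef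
    have hMβT : Mβᵀ = Mδ := kron_sum_transpose A hA β
    have hPSD : (Matrix.fromBlocks L (-Mβ) (-Mδ) (LA A γ)).PosSemidef := by
      have h := hDil.2
      rw [LA_fromBlocks, Matrix.posSemidef_submatrix_equiv] at h
      exact h
    -- kernel vectors kill Mδ
    have hkill : ∀ v : (Fin d × Fin n) → ℝ, L *ᵥ v = 0 → Mδ *ᵥ v = 0 := by
      intro v hv
      funext q
      have hb : ∀ w : (Fin d × Fin k') → ℝ, 0 ≤ w ⬝ᵥ (LA A γ *ᵥ w) := by
        intro w
        have := quad_of_psd hPSD 0 w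
        simpa using this
      have ha : ∀ w : (Fin d × Fin k') → ℝ, (Mδ *ᵥ v) ⬝ᵥ w = 0 := by
        intro w
        apply lin_zero (hb w)
        intro t
        have hq := quad_of_psd hPSD v (t • w)
        have e1 : v ⬝ᵥ (L *ᵥ v) = 0 := by rw [hv]; simp
        have e2 : v ⬝ᵥ ((-Mβ) *ᵥ (t • w)) = -(t * ((Mδ *ᵥ v) ⬝ᵥ w)) := by
          rw [Matrix.neg_mulVec, dotProduct_neg, Matrix.mulVec_smul, dotProduct_smul]
          congr 1
          rw [Matrix.dotProduct_mulVec, ← Matrix.mulVec_transpose, hMβT]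
          simp [smul_eq_mul]
        have e3 : (t • w) ⬝ᵥ ((-Mδ) *ᵥ v) = -(t * ((Mδ *ᵥ v) ⬝ᵥ w)) := by
          rw [Matrix.neg_mulVec, dotProduct_neg, smul_dotProduct]
          rw [dotProduct_comm]
          simp [smul_eq_mul]
        have e4 : (t • w) ⬝ᵥ (LA A γ *ᵥ (t • w)) = t ^ 2 * (w ⬝ᵥ (LA A γ *ᵥ w)) := by
          rw [Matrix.mulVec_smul, smul_dotProduct, dotProduct_smul]
          simp [smul_eq_mul, sq]
          ring
        rw [e1, e2, e3, e4] at hq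
        linarith
      have := ha (Pi.single q 1)
      rwa [dotProduct_single_one] at this
    -- each column of β gives a solution of the linear system
    have hcol : ∀ c0 : Fin k', (fun i => Matrix.of fun r (_ : Fin 1) => β i r c0) = 0 := by
      intro c0
      apply honly
      ext ⟨a0, z⟩ j
      have hv := hrange_ker j
      have h0 := hkill _ hv
      have h1 := congrFun h0 (a0, c0)
      simp only [Matrix.mulVec, dotProduct, hMδdef, Matrix.sum_apply,
        Matrix.kroneckerMap_apply, Matrix.transpose_apply, Pi.zero_apply] at h1
      simp only [Matrix.mul_apply, Matrix.sum_apply, Matrix.kroneckerMap_apply,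
        Matrix.transpose_apply, Matrix.of_apply, Matrix.zero_apply]
      convert h1 using 1
    -- conclude β = 0
    funext i
    ext r c0
    have := congrFun (congrFun (congrFun (hcol c0) i) r) (0 : Fin 1)
    simpa using this
end

section
/- Let A be a g-tuple of d×d real symmetric matrices and let X ∈ D_A(n) be an Arveson extreme point of D_A, where A is a minimal defining tuple. Then gn ≤ d·k_{A,X}, where k_{A,X} = dim ker L_A(X). -/
open Matrix
open scoped Kronecker

/-- Factorization of linear maps through a kernel inclusion. -/
theorem exists_factor_lm {V W U : Type*} [AddCommGroup V] [Module ℝ V]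
    [AddCommGroup W] [Module ℝ W] [AddCommGroup U] [Module ℝ U]
    (f : V →ₗ[ℝ] W) (gm : V →ₗ[ℝ] U) (h : LinearMap.ker f ≤ LinearMap.ker gm) :
    ∃ C : W →ₗ[ℝ] U, ∀ x, gm x = C (f x) := by
  let e := f.quotKerEquivRange
  let g' : (V ⧸ LinearMap.ker f) →ₗ[ℝ] U := (LinearMap.ker f).liftQ gm h
  obtain ⟨C, hC⟩ := LinearMap.exists_extend
    (g' ∘ₗ (e.symm : LinearMap.range f →ₗ[ℝ] V ⧸ LinearMap.ker f))
  refine ⟨C, fun x => ?_⟩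
  have hmem : f x ∈ LinearMap.range f := LinearMap.mem_range_self f x
  have h1 : C (f x) = (g' ∘ₗ (e.symm : LinearMap.range f →ₗ[ℝ] V ⧸ LinearMap.ker f))
      ⟨f x, hmem⟩ := by
    rw [← hC]; rfl
  rw [h1]
  simp only [LinearMap.coe_comp, Function.comp_apply, LinearEquiv.coe_coe]
  rw [show e.symm ⟨f x, hmem⟩ = (LinearMap.ker f).mkQ x from
    LinearMap.quotKerEquivRange_symm_apply_image f x hmem]
  simp [g']

/-- Core bound: if `ker L ⊆ ker W` then `|Wx|² ≲ xᵀLx`. -/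
theorem core_bound {m r : Type*} [Fintype m] [Fintype r] [DecidableEq m] [DecidableEq r]
    {L : Matrix m m ℝ} (hL : L.PosSemidef) (W : Matrix r m ℝ)
    (h : ∀ v, L.mulVec v = 0 → W.mulVec v = 0) :
    ∃ c : ℝ, 0 < c ∧ ∀ x, c * (W.mulVec x ⬝ᵥ W.mulVec x) ≤ x ⬝ᵥ L.mulVec x := by
  set S := (open scoped MatrixOrder in CFC.sqrt L) with hSdef
  have hSS : S * S = L := (open scoped MatrixOrder in CFC.sqrt_mul_sqrt_self L hL.nonneg)
  have hker : LinearMap.ker S.mulVecLin ≤ LinearMap.ker W.mulVecLin := by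
    intro v hv
    simp only [LinearMap.mem_ker, Matrix.mulVecLin_apply] at hv ⊢
    apply h
    rw [← hSS, ← Matrix.mulVec_mulVec, hv, Matrix.mulVec_zero]
  obtain ⟨C, hC⟩ := exists_factor_lm S.mulVecLin W.mulVecLin hker
  set N := LinearMap.toMatrix' C with hN
  have hCN : ∀ y, C y = N.mulVec y := by
    intro y
    rw [hN, ← Matrix.toLin'_apply, Matrix.toLin'_toMatrix']
  set K := ∑ i, ∑ j, (N i j)^2 with hK
  have hK0 : 0 ≤ K := Finset.sum_nonneg fun i _ => Finset.sum_nonneg fun j _ => sq_nonneg _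
  refine ⟨1/(K+1), by positivity, fun x => ?_⟩
  have hWx : W.mulVec x = N.mulVec (S.mulVec x) := by
    have h2 := hC x
    simp only [Matrix.mulVecLin_apply] at h2
    rw [h2, hCN]
  have cauchy : ∀ y : m → ℝ, N.mulVec y ⬝ᵥ N.mulVec y ≤ K * (y ⬝ᵥ y) := by
    intro y
    have h1 : ∀ i, (N.mulVec y i)^2 ≤ (∑ j, (N i j)^2) * (∑ j, (y j)^2) := fun i =>
      Finset.sum_mul_sq_le_sq_mul_sq Finset.univ (fun j => N i j) y
    calc N.mulVec y ⬝ᵥ N.mulVec y = ∑ i, (N.mulVec y i)^2 := by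
          simp [dotProduct, sq]
      _ ≤ ∑ i : r, (∑ j, (N i j)^2) * (∑ j, (y j)^2) :=
          Finset.sum_le_sum fun i _ => h1 i
      _ = K * (y ⬝ᵥ y) := by
          rw [← Finset.sum_mul, hK]
          simp [dotProduct, sq]
  have hsymm : Sᵀ = S := by
    rw [← Matrix.conjTranspose_eq_transpose_of_trivial]
    exact (open scoped MatrixOrder in (CFC.sqrt_nonneg L).posSemidef.1)
  have key : x ⬝ᵥ L.mulVec x = S.mulVec x ⬝ᵥ S.mulVec x := by
    rw [← hSS, ← Matrix.mulVec_mulVec, Matrix.dotProduct_mulVec x S]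
    congr 1
    rw [← hsymm, Matrix.vecMul_transpose, hsymm]
  have hSx0 : 0 ≤ S.mulVec x ⬝ᵥ S.mulVec x :=
    Finset.sum_nonneg fun i _ => mul_self_nonneg _
  rw [key, hWx]
  calc 1/(K+1) * (N.mulVec (S.mulVec x) ⬝ᵥ N.mulVec (S.mulVec x))
      ≤ 1/(K+1) * (K * (S.mulVec x ⬝ᵥ S.mulVec x)) := by
        apply mul_le_mul_of_nonneg_left (cauchy _) (by positivity)
    _ ≤ S.mulVec x ⬝ᵥ S.mulVec x := by
        rw [← mul_assoc]
        nth_rewrite 2 [← one_mul (S.mulVec x ⬝ᵥ S.mulVec x)]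
        apply mul_le_mul_of_nonneg_right _ hSx0
        rw [div_mul_eq_mul_div, one_mul, div_le_one (by positivity)]
        linarith

def blockEquiv (d n k : ℕ) : (Fin d × Fin n) ⊕ (Fin d × Fin k) ≃ Fin d × (Fin n ⊕ Fin k) where
  toFun := Sum.elim (fun p => (p.1, Sum.inl p.2)) (fun p => (p.1, Sum.inr p.2))
  invFun := fun p => Sum.elim (fun q => Sum.inl (p.1, q)) (fun q => Sum.inr (p.1, q)) p.2
  left_inv := by rintro (⟨p, q⟩ | ⟨p, q⟩) <;> rfl
  right_inv := by rintro ⟨p, q | q⟩ <;> rfl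

theorem LA_dilate_submatrix {g d n k : ℕ} (A : Fin g → Matrix (Fin d) (Fin d) ℝ)
    (hA : ∀ i, (A i).IsSymm) (X : Fin g → Matrix (Fin n) (Fin n) ℝ)
    (B : Fin g → Matrix (Fin n) (Fin k) ℝ) :
    (LA A (fun i => Matrix.fromBlocks (X i) (B i) (B i)ᵀ 0)).submatrix
        (blockEquiv d n k) (blockEquiv d n k)
      = Matrix.fromBlocks (LA A X) (-(∑ i, A i ⊗ₖ B i)) (-(∑ i, A i ⊗ₖ B i))ᴴ 1 := by
  ext x y
  rcases x with ⟨p, q⟩ | ⟨p, q⟩ <;> rcases y with ⟨p', q'⟩ | ⟨p', q'⟩ <;>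
    simp [LA, blockEquiv, Matrix.one_apply, Matrix.sum_apply,
      Matrix.kroneckerMap_apply, Prod.ext_iff, Matrix.conjTranspose_apply, Matrix.sub_apply]
  · exact Finset.sum_congr rfl fun i _ => by rw [(hA i).apply]

/-- for a minimal defining tuple `A`, if `X` is an Arveson extreme point
of `D_A(n)` then `gn ≤ d·k_{A,X}` where `k_{A,X} = dim ker L_A(X)`. -/
theorem arveson_kernel_count {g d n : ℕ}
    (A : Fin g → Matrix (Fin d) (Fin d) ℝ) (hA : ∀ i, (A i).IsSymm)
    (hmin : ∀ (d' : ℕ) (B : Fin g → Matrix (Fin d') (Fin d') ℝ),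
      (∀ i, (B i).IsSymm) →
      (∀ (m : ℕ) (Z : Fin g → Matrix (Fin m) (Fin m) ℝ), InDA A Z ↔ InDA B Z) →
      d ≤ d')
    (X : Fin g → Matrix (Fin n) (Fin n) ℝ) (hX : IsArvExt A X) :
    g * n ≤ d * Module.finrank ℝ (LinearMap.ker (LA A X).mulVecLin) := by
  obtain ⟨⟨hXsymm, hL⟩, harv⟩ := hX
  set Kr := LinearMap.ker (LA A X).mulVecLin with hKr
  -- the linear map Λ : β ↦ ∑ i, A i ⊗ₖ β i
  set Lam : (Fin g → Matrix (Fin n) (Fin 1) ℝ) → Matrix (Fin d × Fin n) (Fin d × Fin 1) ℝ :=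
    fun β => ∑ i, A i ⊗ₖ β i with hLam
  have hLamAdd : ∀ β β', Lam (β + β') = Lam β + Lam β' := by
    intro β β'
    simp only [hLam, Pi.add_apply, Matrix.kronecker_add, Finset.sum_add_distrib]
  have hLamSmul : ∀ (t : ℝ) β, Lam (t • β) = t • Lam β := by
    intro t β
    simp only [hLam, Pi.smul_apply, Matrix.kronecker_smul, Finset.smul_sum]
  -- T : β ↦ (v ∈ ker L ↦ (Λ β)ᵀ v)
  let T : (Fin g → Matrix (Fin n) (Fin 1) ℝ) →ₗ[ℝ] (Kr →ₗ[ℝ] (Fin d × Fin 1 → ℝ)) :=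
    { toFun := fun β => ((Lam β)ᵀ.mulVecLin) ∘ₗ Kr.subtype
      map_add' := by
        intro β β'
        ext v x
        simp only [hLamAdd, Matrix.transpose_add, LinearMap.coe_comp, Function.comp_apply,
          Submodule.coe_subtype, Matrix.mulVecLin_apply, Matrix.add_mulVec, Pi.add_apply,
          LinearMap.add_apply]
      map_smul' := by
        intro t β
        ext v x
        simp only [hLamSmul, Matrix.transpose_smul, LinearMap.coe_comp, Function.comp_apply,
          Submodule.coe_subtype, Matrix.mulVecLin_apply, Matrix.smul_mulVec,
          Pi.smul_apply, LinearMap.smul_apply, RingHom.id_apply, smul_eq_mul] }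
  have hinj : Function.Injective T := by
    rw [← LinearMap.ker_eq_bot, LinearMap.ker_eq_bot']
    intro β hβ
    have hker : ∀ v, (LA A X).mulVec v = 0 → (Lam β)ᵀ.mulVec v = 0 := by
      intro v hv
      have hv' : v ∈ Kr := by
        rw [hKr, LinearMap.mem_ker, Matrix.mulVecLin_apply, hv]
      have h3 := congrArg (fun (f : Kr →ₗ[ℝ] (Fin d × Fin 1 → ℝ)) => f ⟨v, hv'⟩) hβ
      rw [Matrix.mulVec_transpose]
      simpa [T, Matrix.mulVecLin_apply, Matrix.mulVec_transpose] using h3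
    obtain ⟨c, hc, hbound⟩ := core_bound hL (Lam β)ᵀ hker
    set t := Real.sqrt c with htdef
    have ht : t ^ 2 = c := Real.sq_sqrt hc.le
    have ht0 : t ≠ 0 := by positivity
    set B : Fin g → Matrix (Fin n) (Fin 1) ℝ := fun i => t • β i with hBdef
    have hNt : (∑ i, A i ⊗ₖ B i) = t • Lam β := by
      rw [show (∑ i, A i ⊗ₖ B i) = Lam (t • β) from rfl, hLamSmul]
    -- the dilation is in D_A
    have hInDA : InDA A (fun i => Matrix.fromBlocks (X i) (B i) (B i)ᵀ ((0 : Fin g → Matrix (Fin 1) (Fin 1) ℝ) i)) := by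
      constructor
      · intro i
        show (Matrix.fromBlocks (X i) (B i) (B i)ᵀ 0).IsSymm
        rw [Matrix.IsSymm, Matrix.fromBlocks_transpose, Matrix.transpose_transpose,
          (hXsymm i).eq, Matrix.transpose_zero]
      · apply (Matrix.posSemidef_submatrix_equiv (blockEquiv d n 1)).mp
        rw [show ((fun i => Matrix.fromBlocks (X i) (B i) (B i)ᵀ
            ((0 : Fin g → Matrix (Fin 1) (Fin 1) ℝ) i))) =
            (fun i => Matrix.fromBlocks (X i) (B i) (B i)ᵀ 0) from rfl]
        rw [LA_dilate_submatrix A hA X B]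
        haveI : Invertible (1 : Matrix (Fin d × Fin 1) (Fin d × Fin 1) ℝ) := invertibleOne
        rw [Matrix.PosDef.fromBlocks₂₂ _ _ Matrix.PosDef.one]
        rw [inv_one, Matrix.mul_one]
        refine Matrix.posSemidef_iff_dotProduct_mulVec.mpr ⟨?_, ?_⟩
        · exact hL.1.sub (Matrix.isHermitian_mul_conjTranspose_self _)
        · intro x
          have hstar : star x = x := by simp
          rw [hstar, Matrix.sub_mulVec, dotProduct_sub]
          have hq : x ⬝ᵥ ((-(∑ i, A i ⊗ₖ B i)) * (-(∑ i, A i ⊗ₖ B i))ᴴ).mulVec x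
              = c * ((Lam β)ᵀ.mulVec x ⬝ᵥ (Lam β)ᵀ.mulVec x) := by
            rw [← Matrix.mulVec_mulVec, Matrix.dotProduct_mulVec]
            have hvm : x ᵥ* (-(∑ i, A i ⊗ₖ B i)) = (-(∑ i, A i ⊗ₖ B i))ᴴ.mulVec x := by
              rw [Matrix.conjTranspose_eq_transpose_of_trivial, Matrix.mulVec_transpose]
            rw [hvm, hNt]
            rw [Matrix.conjTranspose_eq_transpose_of_trivial]
            simp only [Matrix.transpose_neg, Matrix.transpose_smul, Matrix.neg_mulVec,
              Matrix.smul_mulVec, dotProduct_neg, neg_dotProduct,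
              neg_neg, dotProduct_smul, smul_dotProduct, smul_eq_mul]
            rw [← ht]; ring
          rw [hq]
          have := hbound x
          linarith
    have hB0 := harv 1 B 0 hInDA
    funext i
    have h5 : t • β i = 0 := congrFun hB0 i
    rcases smul_eq_zero.mp h5 with h | h
    · exact absurd h ht0
    · exact h
  -- counting
  have hle := LinearMap.finrank_le_finrank_of_injective hinj
  rw [Module.finrank_linearMap] at hle
  rw [Module.finrank_pi_fintype ℝ] at hle
  simp only [Module.finrank_matrix, Module.finrank_self, Fintype.card_fin, mul_one,
    Finset.sum_const, Finset.card_univ, smul_eq_mul, Module.finrank_pi,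
    Fintype.card_prod] at hle
  exact hle.trans_eq (Nat.mul_comm _ _)
end

section
/- Let A be a g-tuple of d×d real symmetric matrices and let X ∈ D_A(n). X is a Euclidean extreme point of D_A(n) if and only if the only β ∈ SM_n(ℝ)^g satisfying [[X,β],[β,γ]] ∈ D_A(2n) for some γ ∈ SM_n(ℝ)^g is β = 0. -/
open Matrix
open scoped Kronecker

/-- `X` is a Euclidean (classical) extreme point of the level-`n` spectrahedron
`D_A(n)`. -/
def IsEucExt {g d n : ℕ} (A : Fin g → Matrix (Fin d) (Fin d) ℝ)
    (X : Fin g → Matrix (Fin n) (Fin n) ℝ) : Prop :=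
  InDA A X ∧ ∀ (Y Z : Fin g → Matrix (Fin n) (Fin n) ℝ) (t : ℝ),
    InDA A Y → InDA A Z → 0 < t → t < 1 →
    X = (fun i => t • Y i + (1 - t) • Z i) → Y = X ∧ Z = X

/-! ### Auxiliary lemmas -/

section Aux

variable {J : Type*} [Fintype J] [DecidableEq J]

omit [DecidableEq J] in
lemma quad_conj (U M : Matrix J J ℝ) (x : J → ℝ) :
    x ⬝ᵥ (U * M * Uᵀ) *ᵥ x = (Uᵀ *ᵥ x) ⬝ᵥ M *ᵥ (Uᵀ *ᵥ x) := by
  rw [← mulVec_mulVec, ← mulVec_mulVec, dotProduct_mulVec (v := x) (A := U),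
    mulVec_transpose, dotProduct_mulVec]

omit [DecidableEq J] in
lemma dot_sum_mulVec {ι : Type*} (s : Finset ι) (M : ι → Matrix J J ℝ) (u u' : J → ℝ) :
    u ⬝ᵥ (∑ i ∈ s, M i) *ᵥ u' = ∑ i ∈ s, u ⬝ᵥ (M i) *ᵥ u' := by
  induction s using Finset.cons_induction with
  | empty => simp
  | cons i s hi ih =>
    rw [Finset.sum_cons, Finset.sum_cons, add_mulVec, dotProduct_add, ih]

omit [Fintype J] [DecidableEq J] in
lemma isHermitian_of_isSymm (M : Matrix J J ℝ) (h : M.IsSymm) : M.IsHermitian := by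
  ext i j
  simp only [conjTranspose_apply, star_trivial]
  exact h.apply i j

omit [Fintype J] [DecidableEq J] in
lemma quad_coeff_zero {a b : ℝ} (h : ∀ r : ℝ, 0 ≤ a * r ^ 2 + b * r) : b = 0 := by
  by_contra hb
  have h2 : 0 < |a| + 1 := by positivity
  have h1 := h (-b / (|a| + 1))
  have h3 := le_abs_self a
  have h4 : 0 < b ^ 2 := by positivity
  have h5 : a * (-b / (|a| + 1)) ^ 2 + b * (-b / (|a| + 1))
      = (b ^ 2 / (|a| + 1) ^ 2) * (a - (|a| + 1)) := by
    field_simp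
    ring
  rw [h5] at h1
  have h6 : a - (|a| + 1) < 0 := by linarith
  have h7 : 0 < b ^ 2 / (|a| + 1) ^ 2 := by positivity
  nlinarith

/-- Key perturbation lemma: if `Λ ⪰ 0`, `B` is symmetric and `ker Λ ⊆ ker B`, then
`Λ ± t B ⪰ 0` for some `t > 0`. -/
lemma exists_small_pert (Λ B : Matrix J J ℝ) (hΛ : Λ.PosSemidef) (hB : B.IsHermitian)
    (hker : ∀ v, Λ *ᵥ v = 0 → B *ᵥ v = 0) :
    ∃ t : ℝ, 0 < t ∧ (Λ + t • B).PosSemidef ∧ (Λ - t • B).PosSemidef := by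
  have hH := hΛ.1
  have hBt : Bᵀ = B := by
    ext i j
    conv_rhs => rw [← hB]
    simp [conjTranspose_apply]
  set μ : J → ℝ := hH.eigenvalues with hμ
  set U : Matrix J J ℝ := (hH.eigenvectorUnitary : Matrix J J ℝ) with hU
  have hspec : Λ = U * diagonal μ * Uᵀ := by
    have := hH.spectral_theorem
    simpa [hU, Matrix.star_eq_conjTranspose, conjTranspose_eq_transpose_of_trivial] using this
  have hUtU : Uᵀ * U = 1 := by
    have := (Matrix.mem_unitaryGroup_iff').mp hH.eigenvectorUnitary.2
    simpa [hU, Matrix.star_eq_conjTranspose, conjTranspose_eq_transpose_of_trivial] using this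
  have hUUt : U * Uᵀ = 1 := by
    have := (Matrix.mem_unitaryGroup_iff).mp hH.eigenvectorUnitary.2
    simpa [hU, Matrix.star_eq_conjTranspose, conjTranspose_eq_transpose_of_trivial] using this
  set B' : Matrix J J ℝ := Uᵀ * B * U with hB'
  have hBconj : B = U * B' * Uᵀ := by
    rw [hB']
    rw [show U * (Uᵀ * B * U) * Uᵀ = (U * Uᵀ) * B * (U * Uᵀ) by
      simp only [Matrix.mul_assoc]]
    rw [hUUt]; simp
  have hB't : B'ᵀ = B' := by
    rw [hB', Matrix.transpose_mul, Matrix.transpose_mul, transpose_transpose, hBt,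
      Matrix.mul_assoc]
  have hcol : ∀ j, μ j = 0 → ∀ i, B' i j = 0 := by
    intro j hj i
    have hev : Λ *ᵥ ⇑(hH.eigenvectorBasis j) = 0 := by
      rw [hH.mulVec_eigenvectorBasis]
      simp [← hμ, hj]
    have hBv : B *ᵥ ⇑(hH.eigenvectorBasis j) = 0 := hker _ hev
    have hcolU : (fun l => U l j) = ⇑(hH.eigenvectorBasis j) := by
      funext l; simp [hU, hH.eigenvectorUnitary_apply]
    have hBU : ∀ k, (B * U) k j = 0 := by
      intro k
      have h1 : (B * U) k j = (B *ᵥ ⇑(hH.eigenvectorBasis j)) k := by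
        rw [← hcolU]; simp [Matrix.mul_apply, mulVec, dotProduct]
      rw [h1, hBv]; simp
    rw [hB', Matrix.mul_assoc, Matrix.mul_apply]
    simp [hBU]
  have hrow : ∀ i, μ i = 0 → ∀ j, B' i j = 0 := fun i hi j => by
    rw [← hB't]; exact hcol i hi j
  by_cases hs : (Finset.univ.filter (fun j => μ j ≠ 0)).Nonempty
  case neg =>
    have hμ0 : ∀ j, μ j = 0 := by
      intro j
      by_contra h
      exact hs ⟨j, Finset.mem_filter.mpr ⟨Finset.mem_univ j, h⟩⟩
    have hΛ0 : Λ = 0 := by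
      rw [hspec]
      have hd : diagonal μ = 0 := by
        ext i j; by_cases h : i = j <;> simp [diagonal, h, hμ0]
      rw [hd]; simp
    have hB0 : B = 0 := by
      ext i j
      have h2 := congrFun (hker (Pi.single j 1) (by rw [hΛ0, Matrix.zero_mulVec])) i
      simpa [mulVec, dotProduct, Pi.single_apply, mul_ite] using h2
    refine ⟨1, one_pos, ?_, ?_⟩ <;>
      · rw [hΛ0, hB0]; simpa using (Matrix.PosSemidef.zero (n := J) (R := ℝ))
  case pos =>
    set lam : ℝ := (Finset.univ.filter (fun j => μ j ≠ 0)).inf' hs μ with hlam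
    have hlampos : 0 < lam := by
      rw [hlam, Finset.lt_inf'_iff]
      intro j hj
      rcases Finset.mem_filter.mp hj with ⟨-, hne⟩
      exact lt_of_le_of_ne (hΛ.eigenvalues_nonneg j) (Ne.symm hne)
    set C : ℝ := ∑ i, ∑ j, |B' i j| with hC
    have hCnonneg : 0 ≤ C := Finset.sum_nonneg fun i _ =>
      Finset.sum_nonneg fun j _ => abs_nonneg _
    set t : ℝ := lam / (C + 1) with ht
    have htpos : 0 < t := div_pos hlampos (by linarith)
    have key : ∀ x : J → ℝ, t * |x ⬝ᵥ B *ᵥ x| ≤ x ⬝ᵥ Λ *ᵥ x := by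
      intro x
      set y : J → ℝ := Uᵀ *ᵥ x with hy
      set z : J → ℝ := fun j => if μ j = 0 then 0 else y j with hz
      set S : ℝ := ∑ k, z k * z k with hS
      have hSnonneg : 0 ≤ S := Finset.sum_nonneg fun k _ => mul_self_nonneg _
      have hzsq : ∀ i, z i * z i ≤ S := fun i =>
        Finset.single_le_sum (f := fun k => z k * z k)
          (fun k _ => mul_self_nonneg _) (Finset.mem_univ i)
      have hzz : ∀ i j, |z i * z j| ≤ S := by
        intro i j
        have h1 := hzsq i
        have h2 := hzsq j
        have h3 : |z i * z j| ≤ (z i * z i + z j * z j) / 2 := by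
          rw [abs_mul]
          nlinarith [abs_nonneg (z i), abs_nonneg (z j), sq_abs (z i), sq_abs (z j),
            sq_nonneg (|z i| - |z j|)]
        nlinarith
      have hqΛ : x ⬝ᵥ Λ *ᵥ x = ∑ j, μ j * (y j * y j) := by
        rw [hspec, quad_conj, ← hy]
        simp [dotProduct, mulVec_diagonal]
        apply Finset.sum_congr rfl; intro j _; ring
      have hqB : x ⬝ᵥ B *ᵥ x = ∑ i, ∑ j, z i * B' i j * z j := by
        rw [hBconj, quad_conj, ← hy]
        simp only [dotProduct, mulVec, Finset.mul_sum]
        apply Finset.sum_congr rfl; intro i _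
        apply Finset.sum_congr rfl; intro j _
        rcases eq_or_ne (μ i) 0 with hi | hi
        · rw [hrow i hi j]; ring
        rcases eq_or_ne (μ j) 0 with hj | hj
        · rw [hcol j hj i]; ring
        simp only [hz, if_neg hi, if_neg hj, dotProduct]
        ring
      have hBbound : |x ⬝ᵥ B *ᵥ x| ≤ C * S := by
        rw [hqB, hC]
        calc |∑ i, ∑ j, z i * B' i j * z j| ≤ ∑ i, ∑ j, |z i * B' i j * z j| := by
              refine (Finset.abs_sum_le_sum_abs _ _).trans ?_
              exact Finset.sum_le_sum fun i _ => Finset.abs_sum_le_sum_abs _ _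
          _ ≤ ∑ i, ∑ j, |B' i j| * S := by
              refine Finset.sum_le_sum fun i _ => Finset.sum_le_sum fun j _ => ?_
              have h5 : |z i * B' i j * z j| = |B' i j| * |z i * z j| := by
                rw [abs_mul, abs_mul, abs_mul]; ring
              rw [h5]
              exact mul_le_mul_of_nonneg_left (hzz i j) (abs_nonneg _)
          _ = (∑ i, ∑ j, |B' i j|) * S := by
              rw [Finset.sum_mul]
              exact Finset.sum_congr rfl fun i _ => (Finset.sum_mul _ _ _).symm
      have hΛlow : lam * S ≤ x ⬝ᵥ Λ *ᵥ x := by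
        rw [hqΛ, hS, Finset.mul_sum]
        refine Finset.sum_le_sum fun j _ => ?_
        rcases eq_or_ne (μ j) 0 with hj | hj
        · simp [hz, hj]
        · have hzj : z j = y j := by simp [hz, hj]
          have hle : lam ≤ μ j :=
            Finset.inf'_le _ (Finset.mem_filter.mpr ⟨Finset.mem_univ j, hj⟩)
          rw [hzj]
          exact mul_le_mul_of_nonneg_right hle (mul_self_nonneg _)
      have htC : t * C ≤ lam := by
        rw [ht, div_mul_eq_mul_div, div_le_iff₀ (by linarith)]
        nlinarith
      calc t * |x ⬝ᵥ B *ᵥ x| ≤ t * (C * S) :=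
            mul_le_mul_of_nonneg_left hBbound htpos.le
        _ = (t * C) * S := by ring
        _ ≤ lam * S := mul_le_mul_of_nonneg_right htC hSnonneg
        _ ≤ x ⬝ᵥ Λ *ᵥ x := hΛlow
    have hΛsymm : ∀ i j, Λ i j = Λ j i := fun i j => by
      conv_lhs => rw [← hΛ.1]
      simp [conjTranspose_apply]
    have hBsymm : ∀ i j, B i j = B j i := fun i j => by
      have h := congrFun (congrFun hBt j) i
      rw [transpose_apply] at h
      exact h
    have hherm : ∀ s : ℝ, (Λ + s • B).IsHermitian := by
      intro s
      ext i j
      simp [conjTranspose_apply, Matrix.add_apply, Matrix.smul_apply, hΛsymm j i,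
        hBsymm j i]
    have main : ∀ s : ℝ, |s| ≤ t → (Λ + s • B).PosSemidef := by
      intro s hs
      refine .of_dotProduct_mulVec_nonneg (hherm s) fun x => ?_
      have hq : (star x) ⬝ᵥ (Λ + s • B) *ᵥ x
          = x ⬝ᵥ Λ *ᵥ x + s * (x ⬝ᵥ B *ᵥ x) := by
        simp [add_mulVec, smul_mulVec, dotProduct_add, dotProduct_smul,
          star_trivial]
      rw [hq]
      have h2 : |s * (x ⬝ᵥ B *ᵥ x)| ≤ t * |x ⬝ᵥ B *ᵥ x| := by
        rw [abs_mul]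
        exact mul_le_mul_of_nonneg_right hs (abs_nonneg _)
      have h3 := key x
      have h4 := neg_abs_le (s * (x ⬝ᵥ B *ᵥ x))
      linarith
    refine ⟨t, htpos, main t (by rw [abs_of_pos htpos]), ?_⟩
    have hsub : Λ - t • B = Λ + (-t) • B := by rw [sub_eq_add_neg, ← neg_smul]
    rw [hsub]
    exact main (-t) (by rw [abs_neg, abs_of_pos htpos])

end Aux

/-! ### Block vector machinery -/

def pairVec {d n : ℕ} (v w : Fin d × Fin n → ℝ) : Fin d × (Fin n ⊕ Fin n) → ℝ :=
  fun p => Sum.elim (fun q => v (p.1, q)) (fun q => w (p.1, q)) p.2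

lemma pairVec_dot {d n : ℕ} (v w : Fin d × Fin n → ℝ) :
    pairVec v w ⬝ᵥ pairVec v w = v ⬝ᵥ v + w ⬝ᵥ w := by
  simp [pairVec, dotProduct, Fintype.sum_prod_type, Fintype.sum_sum_type,
    Finset.sum_add_distrib]

lemma pairVec_eq {d n : ℕ} (u : Fin d × (Fin n ⊕ Fin n) → ℝ) :
    pairVec (fun pq => u (pq.1, Sum.inl pq.2)) (fun pq => u (pq.1, Sum.inr pq.2)) = u := by
  funext p
  obtain ⟨a, b | b⟩ := p <;> rfl

lemma quad_kron_blocks {d n : ℕ} (Cm : Matrix (Fin d) (Fin d) ℝ)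
    (P Q R S : Matrix (Fin n) (Fin n) ℝ) (v w : Fin d × Fin n → ℝ) :
    pairVec v w ⬝ᵥ (Cm ⊗ₖ fromBlocks P Q R S) *ᵥ pairVec v w
      = v ⬝ᵥ (Cm ⊗ₖ P) *ᵥ v + v ⬝ᵥ (Cm ⊗ₖ Q) *ᵥ w
        + w ⬝ᵥ (Cm ⊗ₖ R) *ᵥ v + w ⬝ᵥ (Cm ⊗ₖ S) *ᵥ w := by
  simp only [pairVec, dotProduct, mulVec, kroneckerMap_apply, Fintype.sum_prod_type,
    Fintype.sum_sum_type, Sum.elim_inl, Sum.elim_inr, fromBlocks_apply₁₁,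
    fromBlocks_apply₁₂, fromBlocks_apply₂₁, fromBlocks_apply₂₂,
    Finset.sum_add_distrib, mul_add, add_mul]
  ring

lemma quad_LA_blocks {g d n : ℕ} (A : Fin g → Matrix (Fin d) (Fin d) ℝ)
    (Xt Bt Ct Gt : Fin g → Matrix (Fin n) (Fin n) ℝ) (v w : Fin d × Fin n → ℝ) :
    pairVec v w ⬝ᵥ (LA A (fun i => fromBlocks (Xt i) (Bt i) (Ct i) (Gt i))) *ᵥ pairVec v w
      = v ⬝ᵥ (LA A Xt) *ᵥ v + w ⬝ᵥ (LA A Gt) *ᵥ w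
        - v ⬝ᵥ (∑ i, A i ⊗ₖ Bt i) *ᵥ w - w ⬝ᵥ (∑ i, A i ⊗ₖ Ct i) *ᵥ v := by
  unfold LA
  simp only [sub_mulVec, one_mulVec, dotProduct_sub]
  rw [pairVec_dot, dot_sum_mulVec, dot_sum_mulVec, dot_sum_mulVec, dot_sum_mulVec,
    dot_sum_mulVec]
  have h1 : ∀ i, pairVec v w ⬝ᵥ (A i ⊗ₖ fromBlocks (Xt i) (Bt i) (Ct i) (Gt i)) *ᵥ pairVec v w
      = v ⬝ᵥ (A i ⊗ₖ Xt i) *ᵥ v + v ⬝ᵥ (A i ⊗ₖ Bt i) *ᵥ w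
        + w ⬝ᵥ (A i ⊗ₖ Ct i) *ᵥ v + w ⬝ᵥ (A i ⊗ₖ Gt i) *ᵥ w :=
    fun i => quad_kron_blocks (A i) (Xt i) (Bt i) (Ct i) (Gt i) v w
  rw [Finset.sum_congr rfl fun i _ => h1 i]
  simp only [Finset.sum_add_distrib]
  ring

lemma Ksum_symm {g d n : ℕ} (A : Fin g → Matrix (Fin d) (Fin d) ℝ) (hA : ∀ i, (A i).IsSymm)
    (M : Fin g → Matrix (Fin n) (Fin n) ℝ) (hM : ∀ i, (M i).IsSymm) :
    (∑ i, A i ⊗ₖ M i).IsSymm := by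
  unfold Matrix.IsSymm
  rw [Matrix.transpose_sum]
  refine Finset.sum_congr rfl fun i _ => ?_
  rw [← kroneckerMap_transpose, (hA i).eq, (hM i).eq]

lemma LA_symm {g d : ℕ} {m : Type*} [Fintype m] [DecidableEq m]
    (A : Fin g → Matrix (Fin d) (Fin d) ℝ) (hA : ∀ i, (A i).IsSymm)
    (M : Fin g → Matrix m m ℝ) (hM : ∀ i, (M i).IsSymm) :
    (LA A M).IsSymm := by
  unfold LA Matrix.IsSymm
  rw [Matrix.transpose_sub, Matrix.transpose_one, Matrix.transpose_sum]
  congr 1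
  refine Finset.sum_congr rfl fun i _ => ?_
  rw [← kroneckerMap_transpose, (hA i).eq, (hM i).eq]

/-- `X ∈ D_A(n)` is a Euclidean extreme point iff the only symmetric
tuple `β` with `[[X,β],[β,γ]] ∈ D_A(2n)` for some symmetric `γ` is `β = 0`. -/
theorem euclidean_extreme_iff_dilation {g d n : ℕ}
    (A : Fin g → Matrix (Fin d) (Fin d) ℝ) (hA : ∀ i, (A i).IsSymm)
    (X : Fin g → Matrix (Fin n) (Fin n) ℝ) (hX : InDA A X) :
    IsEucExt A X ↔
      ∀ β : Fin g → Matrix (Fin n) (Fin n) ℝ, (∀ i, (β i).IsSymm) →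
        (∃ γ : Fin g → Matrix (Fin n) (Fin n) ℝ, (∀ i, (γ i).IsSymm) ∧
          InDA A (fun i => Matrix.fromBlocks (X i) (β i) (β i) (γ i))) →
        β = 0 := by
  constructor
  · -- extreme point → only trivial dilations
    rintro ⟨-, hExt⟩ β hβ ⟨γ, hγ, hW⟩
    set Λ : Matrix (Fin d × Fin n) (Fin d × Fin n) ℝ := LA A X with hΛdef
    set Bm : Matrix (Fin d × Fin n) (Fin d × Fin n) ℝ := ∑ i, A i ⊗ₖ β i with hBmdef
    have hBmsymm : Bm.IsSymm := Ksum_symm A hA β hβ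
    have hBmherm : Bm.IsHermitian := isHermitian_of_isSymm _ hBmsymm
    -- kernel inclusion
    have hker : ∀ v, Λ *ᵥ v = 0 → Bm *ᵥ v = 0 := by
      intro v hv
      have hq : ∀ w : Fin d × Fin n → ℝ, v ⬝ᵥ Bm *ᵥ w = 0 := by
        intro w
        have hquad : ∀ r : ℝ,
            0 ≤ (w ⬝ᵥ (LA A γ) *ᵥ w) * r ^ 2 + (-(2 * (v ⬝ᵥ Bm *ᵥ w))) * r := by
          intro r
          have h0 := hW.2.dotProduct_mulVec_nonneg (pairVec v (r • w))
          rw [star_trivial] at h0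
          rw [quad_LA_blocks A X β β γ v (r • w)] at h0
          have hvv : v ⬝ᵥ Λ *ᵥ v = 0 := by rw [hΛdef] at hv ⊢; rw [hv]; simp
          have hsym : (r • w) ⬝ᵥ Bm *ᵥ v = v ⬝ᵥ Bm *ᵥ (r • w) := by
            rw [dotProduct_mulVec, ← mulVec_transpose, hBmsymm.eq, dotProduct_comm]
          rw [← hBmdef, hsym] at h0
          have hexp : v ⬝ᵥ (LA A X) *ᵥ v + (r • w) ⬝ᵥ (LA A γ) *ᵥ (r • w)
              - v ⬝ᵥ Bm *ᵥ (r • w) - v ⬝ᵥ Bm *ᵥ (r • w)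
              = (w ⬝ᵥ (LA A γ) *ᵥ w) * r ^ 2 + (-(2 * (v ⬝ᵥ Bm *ᵥ w))) * r := by
            rw [← hΛdef]
            simp only [mulVec_smul, dotProduct_smul, smul_dotProduct, smul_eq_mul, hvv]
            ring
          rw [hexp] at h0
          exact h0
        have := quad_coeff_zero hquad
        linarith
      funext j
      have h1 := hq (Pi.single j 1)
      have h2 : v ⬝ᵥ Bm *ᵥ Pi.single j 1 = (Bm *ᵥ v) j := by
        rw [dotProduct_mulVec]
        simp only [dotProduct, Pi.single_apply, mul_ite, mul_one, mul_zero,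
          Finset.sum_ite_eq', Finset.mem_univ, if_true]
        rw [← mulVec_transpose, hBmsymm.eq]
      rw [h2] at h1
      simpa using h1
    obtain ⟨t, htpos, hplus, hminus⟩ := exists_small_pert Λ Bm hX.2 hBmherm hker
    -- X ± t β ∈ D_A
    have hKlin : ∀ (s : ℝ), LA A (fun i => X i + s • β i) = Λ - s • Bm := by
      intro s
      unfold LA
      rw [hΛdef, hBmdef]
      unfold LA
      have : ∀ i, A i ⊗ₖ (X i + s • β i) = A i ⊗ₖ X i + s • (A i ⊗ₖ β i) := by
        intro i
        rw [Matrix.kronecker_add, Matrix.kronecker_smul]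
      rw [Finset.sum_congr rfl fun i _ => this i, Finset.sum_add_distrib, ← Finset.smul_sum]
      abel
    have hsymmY : ∀ (s : ℝ) i, (X i + s • β i).IsSymm := by
      intro s i
      apply Matrix.IsSymm.ext
      intro a b
      simp [Matrix.add_apply, Matrix.smul_apply, (hX.1 i).apply a b, (hβ i).apply a b]
    have hYin : InDA A (fun i => X i + t • β i) := by
      refine ⟨hsymmY t, ?_⟩
      rw [hKlin t]
      exact hminus
    have hZin : InDA A (fun i => X i + (-t) • β i) := by
      refine ⟨hsymmY (-t), ?_⟩
      rw [hKlin (-t), neg_smul, sub_neg_eq_add]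
      exact hplus
    have hXeq : X = fun i => (1/2 : ℝ) • (X i + t • β i) + (1 - 1/2 : ℝ) • (X i + (-t) • β i) := by
      funext i
      ext a b
      simp only [Matrix.add_apply, Matrix.smul_apply, smul_eq_mul]
      ring
    obtain ⟨hYX, -⟩ := hExt _ _ (1/2) hYin hZin (by norm_num) (by norm_num) hXeq
    funext i
    have h1 := congrFun hYX i
    have h2 : t • β i = 0 := by
      have h3 : X i + t • β i = X i + 0 := by rw [h1]; rw [add_zero]
      exact add_left_cancel h3
    have h4 := (smul_eq_zero.mp h2).resolve_left htpos.ne'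
    simpa using h4
  · -- only trivial dilations → extreme point
    intro H
    refine ⟨hX, ?_⟩
    intro Y Z t hY hZ ht0 ht1 hXe
    set c : ℝ := Real.sqrt t with hc
    set s : ℝ := Real.sqrt (1 - t) with hs
    have hc2 : c ^ 2 = t := Real.sq_sqrt ht0.le
    have hs2 : s ^ 2 = 1 - t := Real.sq_sqrt (by linarith)
    have hcpos : 0 < c := Real.sqrt_pos.mpr ht0
    have hspos : 0 < s := Real.sqrt_pos.mpr (by linarith)
    set β : Fin g → Matrix (Fin n) (Fin n) ℝ := fun i => (c * s) • (Y i - Z i) with hβdef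
    set γ : Fin g → Matrix (Fin n) (Fin n) ℝ := fun i => (1 - t) • Y i + t • Z i with hγdef
    have hβsymm : ∀ i, (β i).IsSymm := by
      intro i
      apply Matrix.IsSymm.ext
      intro a b
      simp [hβdef, Matrix.sub_apply, (hY.1 i).apply a b, (hZ.1 i).apply a b]
    have hγsymm : ∀ i, (γ i).IsSymm := by
      intro i
      apply Matrix.IsSymm.ext
      intro a b
      simp [hγdef, (hY.1 i).apply a b, (hZ.1 i).apply a b]
    have hWsymm : ∀ i, (fromBlocks (X i) (β i) (β i) (γ i)).IsSymm := by
      intro i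
      have hXs : (X i).IsSymm := hX.1 i
      unfold Matrix.IsSymm
      rw [fromBlocks_transpose, hXs.eq, (hβsymm i).eq, (hγsymm i).eq]
    have hWpsd : (LA A (fun i => fromBlocks (X i) (β i) (β i) (γ i))).PosSemidef := by
      refine .of_dotProduct_mulVec_nonneg (isHermitian_of_isSymm _ (LA_symm A hA _ hWsymm)) ?_
      intro u
      rw [star_trivial]
      set v : Fin d × Fin n → ℝ := fun pq => u (pq.1, Sum.inl pq.2) with hv
      set w : Fin d × Fin n → ℝ := fun pq => u (pq.1, Sum.inr pq.2) with hw
      rw [← pairVec_eq u, quad_LA_blocks A X β β γ v w]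
      have hcs1 : c ^ 2 + s ^ 2 = 1 := by rw [hc2, hs2]; ring
      set a : Fin d × Fin n → ℝ := c • v + s • w with ha
      set b : Fin d × Fin n → ℝ := s • v - c • w with hb
      set KY : Matrix (Fin d × Fin n) (Fin d × Fin n) ℝ := ∑ i, A i ⊗ₖ Y i with hKY
      set KZ : Matrix (Fin d × Fin n) (Fin d × Fin n) ℝ := ∑ i, A i ⊗ₖ Z i with hKZ
      have hLX : LA A X = 1 - (c ^ 2 • KY + s ^ 2 • KZ) := by
        unfold LA
        rw [hKY, hKZ]
        congr 1
        have h1 : ∀ i, A i ⊗ₖ X i = c ^ 2 • (A i ⊗ₖ Y i) + s ^ 2 • (A i ⊗ₖ Z i) := by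
          intro i
          rw [congrFun hXe i, ← hs2, ← hc2, Matrix.kronecker_add, Matrix.kronecker_smul,
            Matrix.kronecker_smul]
        rw [Finset.sum_congr rfl fun i _ => h1 i, Finset.sum_add_distrib,
          ← Finset.smul_sum, ← Finset.smul_sum]
      have hLγ : LA A γ = 1 - (s ^ 2 • KY + c ^ 2 • KZ) := by
        unfold LA
        rw [hKY, hKZ]
        congr 1
        have h1 : ∀ i, A i ⊗ₖ γ i = s ^ 2 • (A i ⊗ₖ Y i) + c ^ 2 • (A i ⊗ₖ Z i) := by
          intro i
          rw [hγdef]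
          simp only
          rw [← hs2, ← hc2, Matrix.kronecker_add, Matrix.kronecker_smul,
            Matrix.kronecker_smul]
        rw [Finset.sum_congr rfl fun i _ => h1 i, Finset.sum_add_distrib,
          ← Finset.smul_sum, ← Finset.smul_sum]
      have hLβ : (∑ i, A i ⊗ₖ β i) = (c * s) • KY + (-(c * s)) • KZ := by
        rw [hKY, hKZ]
        have h1 : ∀ i, A i ⊗ₖ β i
            = (c * s) • (A i ⊗ₖ Y i) + (-(c * s)) • (A i ⊗ₖ Z i) := by
          intro i
          ext p q
          simp only [hβdef, kroneckerMap_apply, Matrix.sub_apply, Matrix.smul_apply,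
            Matrix.add_apply, Matrix.neg_apply, smul_eq_mul]
          ring
        rw [Finset.sum_congr rfl fun i _ => h1 i, Finset.sum_add_distrib,
          ← Finset.smul_sum, ← Finset.smul_sum]
      have hLY : LA A Y = 1 - KY := rfl
      have hLZ : LA A Z = 1 - KZ := rfl
      have hgoal : v ⬝ᵥ (LA A X) *ᵥ v + w ⬝ᵥ (LA A γ) *ᵥ w
          - v ⬝ᵥ (∑ i, A i ⊗ₖ β i) *ᵥ w - w ⬝ᵥ (∑ i, A i ⊗ₖ β i) *ᵥ v
          = a ⬝ᵥ (LA A Y) *ᵥ a + b ⬝ᵥ (LA A Z) *ᵥ b := by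
        rw [hLX, hLγ, hLβ, hLY, hLZ, ha, hb]
        simp only [sub_mulVec, add_mulVec, one_mulVec, smul_mulVec, mulVec_add,
          mulVec_sub, mulVec_smul, dotProduct_sub, dotProduct_add, dotProduct_smul, sub_dotProduct,
          add_dotProduct, smul_dotProduct, smul_eq_mul, neg_smul, neg_mulVec,
          dotProduct_neg, neg_dotProduct]
        linear_combination (-(v ⬝ᵥ v) - (w ⬝ᵥ w)) * hcs1
      rw [hgoal]
      have h1 := hY.2.dotProduct_mulVec_nonneg a
      have h2 := hZ.2.dotProduct_mulVec_nonneg b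
      rw [star_trivial] at h1 h2
      linarith
    have hβ0 := H β hβsymm ⟨γ, hγsymm, ⟨hWsymm, hWpsd⟩⟩
    have hYZ : Y = Z := by
      funext i
      have := congrFun hβ0 i
      rw [hβdef] at this
      simp only [Pi.zero_apply] at this
      have hcs : c * s ≠ 0 := (mul_pos hcpos hspos).ne'
      have := (smul_eq_zero.mp this).resolve_left hcs
      exact sub_eq_zero.mp this
    have hYX : Y = X := by
      funext i
      rw [congrFun hXe i, hYZ]
      rw [← add_smul]
      simp
    exact ⟨hYX, by rw [← hYZ, hYX]⟩
end

section
/- A free spectrahedron D_A is bounded (i.e., there is C > 0 with C·I_n - Σ_i X_i^2 ⪰ 0 for all X ∈ D_A(n) and all n) if and only if its first level D_A(1) ⊆ ℝ^g is a bounded subset of ℝ^g. -/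
open Matrix
open scoped Kronecker

section Aux

private lemma dp_self_nonneg {n : Type*} [Fintype n] (v : n → ℝ) : 0 ≤ v ⬝ᵥ v :=
  Finset.sum_nonneg fun _ _ => mul_self_nonneg _

private lemma dp_sum {g : ℕ} {n : Type*} [Fintype n] (v : n → ℝ) (u : Fin g → n → ℝ) :
    v ⬝ᵥ (∑ i, u i) = ∑ i, v ⬝ᵥ u i := by
  simp only [dotProduct, Finset.sum_apply, Finset.mul_sum]
  exact Finset.sum_comm ..

private lemma sum_mulVec' {g : ℕ} {n : Type*} [Fintype n] (M : Fin g → Matrix n n ℝ) (v : n → ℝ) :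
    (∑ i, M i) *ᵥ v = ∑ i, M i *ᵥ v := by
  funext j
  simp only [mulVec, dotProduct, Finset.sum_apply, Matrix.sum_apply, Finset.sum_mul]
  exact Finset.sum_comm ..

private lemma dp_symm {n : Type*} [Fintype n] {B : Matrix n n ℝ} (hB : B.IsSymm)
    (v w : n → ℝ) : v ⬝ᵥ B *ᵥ w = w ⬝ᵥ B *ᵥ v := by
  simp only [dotProduct, mulVec, Finset.mul_sum]
  rw [Finset.sum_comm]
  exact Finset.sum_congr rfl fun i _ => Finset.sum_congr rfl fun j _ => by
    rw [hB.apply i j]; ring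

private lemma symm_to_herm {n : Type*} [Fintype n] {M : Matrix n n ℝ} (hM : M.IsSymm) :
    M.IsHermitian := by
  rw [Matrix.IsHermitian, Matrix.conjTranspose]
  exact isHermitian_iff_isSymm.2 hM

private lemma quad_kron {d m : ℕ} (A : Matrix (Fin d) (Fin d) ℝ) (X : Matrix (Fin m) (Fin m) ℝ)
    (u : Fin d → ℝ) (w : Fin m → ℝ) :
    (fun p : Fin d × Fin m => u p.1 * w p.2) ⬝ᵥ ((A ⊗ₖ X) *ᵥ fun p => u p.1 * w p.2)
      = (u ⬝ᵥ A *ᵥ u) * (w ⬝ᵥ X *ᵥ w) := by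
  simp only [dotProduct, mulVec, kroneckerMap_apply, Fintype.sum_prod_type,
    Finset.mul_sum, Finset.sum_mul]
  rw [Finset.sum_comm]
  refine Finset.sum_congr rfl fun y _ => ?_
  rw [show (∑ e : Fin m, ∑ a : Fin d, ∑ c : Fin d,
        u a * (A a c * u c) * (w y * (X y e * w e)))
      = ∑ a : Fin d, ∑ c : Fin d, ∑ e : Fin m,
        u a * (A a c * u c) * (w y * (X y e * w e)) by
    rw [Finset.sum_comm]
    exact Finset.sum_congr rfl fun a _ => Finset.sum_comm ..]
  exact Finset.sum_congr rfl fun a _ => Finset.sum_congr rfl fun c _ =>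
    Finset.sum_congr rfl fun e _ => by ring

private lemma dp_prod_self {d m : ℕ} (u : Fin d → ℝ) (w : Fin m → ℝ) :
    (fun p : Fin d × Fin m => u p.1 * w p.2) ⬝ᵥ (fun p : Fin d × Fin m => u p.1 * w p.2)
      = (u ⬝ᵥ u) * (w ⬝ᵥ w) := by
  simp only [dotProduct, Fintype.sum_prod_type, Finset.sum_mul, Finset.mul_sum]
  rw [Finset.sum_comm]
  exact Finset.sum_congr rfl fun a _ => Finset.sum_congr rfl fun b _ => by ring

/-- Polarization: a symmetric matrix with numerical radius ≤ N has operator norm ≤ N. -/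
private lemma norm_sq_mulVec_le {n : ℕ} {B : Matrix (Fin n) (Fin n) ℝ} (hB : B.IsSymm)
    {N : ℝ} (hN : 0 < N) (h : ∀ w, |w ⬝ᵥ B *ᵥ w| ≤ N * (w ⬝ᵥ w)) (v : Fin n → ℝ) :
    (B *ᵥ v) ⬝ᵥ (B *ᵥ v) ≤ N ^ 2 * (v ⬝ᵥ v) := by
  set u := B *ᵥ v with hu
  have key : ∀ w : Fin n → ℝ, 4 * (w ⬝ᵥ u) ≤ 2 * N * ((v ⬝ᵥ v) + w ⬝ᵥ w) := by
    intro w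
    have e1 : (v + w) ⬝ᵥ B *ᵥ (v + w) - (v - w) ⬝ᵥ B *ᵥ (v - w) = 4 * (w ⬝ᵥ u) := by
      simp only [hu, mulVec_add, mulVec_sub, dotProduct_add, dotProduct_sub,
        add_dotProduct, sub_dotProduct]
      rw [dp_symm hB v w]
      ring
    have e2 : (v + w) ⬝ᵥ (v + w) + (v - w) ⬝ᵥ (v - w) = 2 * ((v ⬝ᵥ v) + w ⬝ᵥ w) := by
      simp only [dotProduct_add, dotProduct_sub, add_dotProduct, sub_dotProduct]
      ring
    have a1 : (v + w) ⬝ᵥ B *ᵥ (v + w) ≤ N * ((v + w) ⬝ᵥ (v + w)) :=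
      le_trans (le_abs_self _) (h _)
    have a2 : -((v - w) ⬝ᵥ B *ᵥ (v - w)) ≤ N * ((v - w) ⬝ᵥ (v - w)) :=
      le_trans (neg_le_abs _) (h _)
    nlinarith [e1, e2, a1, a2]
  have hk := key (N⁻¹ • u)
  simp only [smul_dotProduct, dotProduct_smul, smul_eq_mul] at hk
  have hk2 := mul_le_mul_of_nonneg_left hk hN.le
  have hl : N * (4 * (N⁻¹ * (u ⬝ᵥ u))) = 4 * (u ⬝ᵥ u) := by
    field_simp
  have hr : N * (2 * N * ((v ⬝ᵥ v) + N⁻¹ * (N⁻¹ * (u ⬝ᵥ u))))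
      = 2 * N ^ 2 * (v ⬝ᵥ v) + 2 * (u ⬝ᵥ u) := by
    field_simp
  rw [hl, hr] at hk2
  linarith

/-- The compression of an element of `D_A(m)` along a vector lies in `D_A(1)`. -/
private lemma compress {g d m : ℕ} {A : Fin g → Matrix (Fin d) (Fin d) ℝ}
    (hA : ∀ i, (A i).IsSymm) {X : Fin g → Matrix (Fin m) (Fin m) ℝ}
    (hX : (LA A X).PosSemidef) (w : Fin m → ℝ) (hw : w ⬝ᵥ w ≠ 0) :
    ((1 : Matrix (Fin d) (Fin d) ℝ)
      - ∑ i, ((w ⬝ᵥ X i *ᵥ w) / (w ⬝ᵥ w)) • A i).PosSemidef := by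
  have hww : 0 < w ⬝ᵥ w := lt_of_le_of_ne (dp_self_nonneg w) (Ne.symm hw)
  refine posSemidef_iff_dotProduct_mulVec.2 ⟨?_, ?_⟩
  · refine symm_to_herm ?_
    simp only [Matrix.IsSymm, transpose_sub, transpose_one, transpose_sum, transpose_smul]
    congr 1
    exact Finset.sum_congr rfl fun i _ => by rw [(hA i).eq]
  · intro u
    have hz := hX.dotProduct_mulVec_nonneg (fun p : Fin d × Fin m => u p.1 * w p.2)
    simp only [star_trivial, LA, sub_mulVec, dotProduct_sub, one_mulVec,
      sum_mulVec', dp_sum, quad_kron, dp_prod_self] at hz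
    have expand : star u ⬝ᵥ (((1 : Matrix (Fin d) (Fin d) ℝ)
        - ∑ i, ((w ⬝ᵥ X i *ᵥ w) / (w ⬝ᵥ w)) • A i) *ᵥ u)
        = ((u ⬝ᵥ u) * (w ⬝ᵥ w) - ∑ i, (u ⬝ᵥ A i *ᵥ u) * (w ⬝ᵥ X i *ᵥ w)) / (w ⬝ᵥ w) := by
      simp only [star_trivial, sub_mulVec, dotProduct_sub, one_mulVec,
        sum_mulVec', dp_sum, smul_mulVec, dotProduct_smul, smul_eq_mul]
      rw [sub_div, Finset.sum_div, mul_div_cancel_right₀ _ hw]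
      congr 1
      exact Finset.sum_congr rfl fun i _ => by field_simp
    rw [expand]
    exact div_nonneg (by linarith) hww.le

end Aux

/-- a free spectrahedron is bounded iff its first level is a bounded
subset of `ℝ^g`. -/
theorem free_spectrahedron_bounded_iff_level_one {g d : ℕ}
    (A : Fin g → Matrix (Fin d) (Fin d) ℝ) (hA : ∀ i, (A i).IsSymm) :
    (∃ C : ℝ, 0 < C ∧ ∀ (m : ℕ) (X : Fin g → Matrix (Fin m) (Fin m) ℝ), InDA A X →
      (C • (1 : Matrix (Fin m) (Fin m) ℝ) - ∑ i, X i * X i).PosSemidef) ↔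
    Bornology.IsBounded
      {x : Fin g → ℝ | ((1 : Matrix (Fin d) (Fin d) ℝ) - ∑ i, x i • A i).PosSemidef} := by
  constructor
  · rintro ⟨C, hC, h⟩
    rw [isBounded_iff_forall_norm_le]
    refine ⟨Real.sqrt C, fun x hx => ?_⟩
    -- embed x as a tuple of 1×1 matrices
    set X : Fin g → Matrix (Fin 1) (Fin 1) ℝ := fun i => x i • 1 with hXdef
    have hmem : InDA A X := by
      constructor
      · intro i; simp [hXdef, Matrix.IsSymm]
      · refine posSemidef_iff_dotProduct_mulVec.2 ⟨?_, ?_⟩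
        · refine symm_to_herm ?_
          simp only [LA, Matrix.IsSymm, transpose_sub, transpose_one, transpose_sum]
          congr 1
          refine Finset.sum_congr rfl fun i _ => ?_
          ext p q
          simp only [transpose_apply, kroneckerMap_apply]
          rw [(hA i).apply p.1 q.1, Subsingleton.elim q.2 p.2]
        · intro z
          set u : Fin d → ℝ := fun a => z (a, 0) with hudef
          set w : Fin 1 → ℝ := fun _ => 1 with hwdef
          have hzuw : z = fun p : Fin d × Fin 1 => u p.1 * w p.2 := by
            funext p
            rcases p with ⟨a, b⟩
            rw [Subsingleton.elim b (0 : Fin 1)]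
            simp [hudef, hwdef]
          have hwX : ∀ i, w ⬝ᵥ X i *ᵥ w = x i := by
            intro i
            simp [hwdef, hXdef, dotProduct, mulVec, Fin.sum_univ_one, Matrix.one_apply]
          have hx2 := hx.dotProduct_mulVec_nonneg u
          simp only [star_trivial, sub_mulVec, dotProduct_sub, one_mulVec,
            sum_mulVec', dp_sum, smul_mulVec, dotProduct_smul, smul_eq_mul] at hx2
          rw [hzuw]
          simp only [star_trivial, LA, sub_mulVec, dotProduct_sub, one_mulVec,
            sum_mulVec', dp_sum, quad_kron, dp_prod_self]
          have hww : w ⬝ᵥ w = 1 := by simp [hwdef, dotProduct]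
          rw [hww]
          calc (0:ℝ) ≤ u ⬝ᵥ u - ∑ i, x i * (u ⬝ᵥ A i *ᵥ u) := hx2
          _ = u ⬝ᵥ u * 1 - ∑ i, (u ⬝ᵥ A i *ᵥ u) * (w ⬝ᵥ X i *ᵥ w) := by
              rw [mul_one]
              congr 1
              exact Finset.sum_congr rfl fun i _ => by rw [hwX i]; ring
    have hres := (h 1 X hmem).dotProduct_mulVec_nonneg (fun _ => 1)
    have hres' : (0:ℝ) ≤ C - ∑ i, (x i)^2 := by
      have : star (fun _ => (1:ℝ)) ⬝ᵥ ((C • (1 : Matrix (Fin 1) (Fin 1) ℝ)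
          - ∑ i, X i * X i) *ᵥ fun _ => 1) = C - ∑ i, (x i)^2 := by
        simp only [star_trivial, sub_mulVec, dotProduct_sub, sum_mulVec', dp_sum,
          smul_mulVec, dotProduct_smul, smul_eq_mul, one_mulVec]
        rw [show (fun _ => (1:ℝ)) ⬝ᵥ (fun _ => (1:ℝ)) = 1 by simp [dotProduct]]
        rw [mul_one]
        congr 1
        refine Finset.sum_congr rfl fun i _ => ?_
        simp [hXdef, dotProduct, mulVec, Fin.sum_univ_one, Matrix.one_apply, smul_mul_smul_comm,
          pow_two]
      rw [this] at hres
      exact hres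
    rw [pi_norm_le_iff_of_nonneg (Real.sqrt_nonneg C)]
    intro i
    rw [Real.norm_eq_abs]
    refine Real.abs_le_sqrt ?_
    have hterm : (x i)^2 ≤ ∑ j, (x j)^2 :=
      Finset.single_le_sum (fun j _ => sq_nonneg (x j)) (Finset.mem_univ i)
    linarith
  · intro hB
    obtain ⟨R, hR⟩ := isBounded_iff_forall_norm_le.1 hB
    set N : ℝ := max R 0 + 1 with hNdef
    have hN : 0 < N := by positivity
    refine ⟨g * N^2 + 1, by positivity, ?_⟩
    rintro m X ⟨hs, hpsd⟩
    have hbound : ∀ i (w : Fin m → ℝ), |w ⬝ᵥ X i *ᵥ w| ≤ N * (w ⬝ᵥ w) := by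
      intro i w
      by_cases hw : w ⬝ᵥ w = 0
      · have hw0 : w = 0 := by
          funext j
          have h2 := (Finset.sum_eq_zero_iff_of_nonneg
            (fun i _ => mul_self_nonneg (w i))).1 hw j (Finset.mem_univ j)
          simpa [mul_self_eq_zero] using h2
        simp [hw0, hw]
      · have hc := compress hA hpsd w hw
        have hmem : (fun j => (w ⬝ᵥ X j *ᵥ w) / (w ⬝ᵥ w)) ∈
            {x : Fin g → ℝ | ((1 : Matrix (Fin d) (Fin d) ℝ) - ∑ i, x i • A i).PosSemidef} := hc
        have hnx := hR _ hmem
        have hxi : |(w ⬝ᵥ X i *ᵥ w) / (w ⬝ᵥ w)| ≤ N := by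
          calc |(w ⬝ᵥ X i *ᵥ w) / (w ⬝ᵥ w)| = ‖(fun j => (w ⬝ᵥ X j *ᵥ w) / (w ⬝ᵥ w)) i‖ := rfl
          _ ≤ ‖fun j => (w ⬝ᵥ X j *ᵥ w) / (w ⬝ᵥ w)‖ :=
              norm_le_pi_norm (fun j => (w ⬝ᵥ X j *ᵥ w) / (w ⬝ᵥ w)) i
          _ ≤ R := hnx
          _ ≤ N := by rw [hNdef]; have := le_max_left R 0; linarith
        have hww : 0 < w ⬝ᵥ w := lt_of_le_of_ne (dp_self_nonneg w) (Ne.symm hw)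
        rw [abs_div, abs_of_pos hww, div_le_iff₀ hww] at hxi
        exact hxi
    refine posSemidef_iff_dotProduct_mulVec.2 ⟨?_, ?_⟩
    · refine symm_to_herm ?_
      simp only [Matrix.IsSymm, transpose_sub, transpose_smul, transpose_one, transpose_sum,
        transpose_mul]
      congr 1
      exact Finset.sum_congr rfl fun i _ => by rw [(hs i).eq]
    · intro v
      have expand : star v ⬝ᵥ (((g * N^2 + 1) • (1 : Matrix (Fin m) (Fin m) ℝ)
          - ∑ i, X i * X i) *ᵥ v)
          = (g * N^2 + 1) * (v ⬝ᵥ v) - ∑ i, (X i *ᵥ v) ⬝ᵥ (X i *ᵥ v) := by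
        simp only [star_trivial, sub_mulVec, dotProduct_sub, sum_mulVec', dp_sum,
          smul_mulVec, dotProduct_smul, smul_eq_mul, one_mulVec]
        congr 1
        refine Finset.sum_congr rfl fun i _ => ?_
        rw [← Matrix.mulVec_mulVec, dp_symm (hs i) v (X i *ᵥ v)]
      rw [expand]
      have hsum : ∑ i, (X i *ᵥ v) ⬝ᵥ (X i *ᵥ v) ≤ (g : ℝ) * (N^2 * (v ⬝ᵥ v)) := by
        calc ∑ i, (X i *ᵥ v) ⬝ᵥ (X i *ᵥ v) ≤ ∑ _i : Fin g, N^2 * (v ⬝ᵥ v) :=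
          Finset.sum_le_sum fun i _ => norm_sq_mulVec_le (hs i) hN (hbound i) v
        _ = (g : ℝ) * (N^2 * (v ⬝ᵥ v)) := by
          rw [Finset.sum_const, Finset.card_univ, Fintype.card_fin, nsmul_eq_mul]
      have := dp_self_nonneg v
      nlinarith [hsum]
end

section
/- Let A be a g-tuple of d×d real symmetric matrices with D_A bounded, let X ∈ D_A(n), and suppose X is not an Arveson extreme point of D_A. Then there exists a maximal 1-dilation of X: a nonzero β ∈ M_{n×1}(ℝ)^g with ker L_A(X) ⊆ ker Λ_A(β^T), a real c which maximizes α subject to the dilation [[X, αβ],[αβ^T, γ]] ∈ D_A(n+1) for some γ ∈ ℝ^g, and the maximum c is attained and strictly positive. -/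
open Matrix
open scoped Kronecker

lemma LA_submatrix {g : ℕ} {D m m' : Type*} [Fintype D] [Fintype m] [Fintype m']
    [DecidableEq D] [DecidableEq m] [DecidableEq m']
    (A : Fin g → Matrix D D ℝ) (Z : Fin g → Matrix m m ℝ) (f : m' → m)
    (hf : Function.Injective f) :
    LA A (fun i => (Z i).submatrix f f)
      = (LA A Z).submatrix (Prod.map id f) (Prod.map id f) := by
  ext ⟨p, x⟩ ⟨q, y⟩
  simp [LA, Matrix.sub_apply, Matrix.sum_apply, Matrix.one_apply, Prod.ext_iff, hf.eq_iff]

lemma InDA_submatrix {g : ℕ} {D m m' : Type*} [Fintype D] [Fintype m] [Fintype m']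
    [DecidableEq D] [DecidableEq m] [DecidableEq m']
    (A : Fin g → Matrix D D ℝ) (Z : Fin g → Matrix m m ℝ) (f : m' → m)
    (hf : Function.Injective f) (h : InDA A Z) :
    InDA A (fun i => (Z i).submatrix f f) := by
  refine ⟨fun i => ?_, ?_⟩
  · have := h.1 i
    simp only [Matrix.IsSymm] at this ⊢
    rw [Matrix.transpose_submatrix, this]
  · rw [LA_submatrix A Z f hf]
    exact h.2.submatrix _

noncomputable def dil {g n : ℕ} (X : Fin g → Matrix (Fin n) (Fin n) ℝ)
    (b : Fin g → Matrix (Fin n) (Fin 1) ℝ) (p : ℝ × (Fin g → ℝ)) :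
    Fin g → Matrix (Fin n ⊕ Fin 1) (Fin n ⊕ Fin 1) ℝ :=
  fun i => Matrix.fromBlocks (X i) (p.1 • b i) (p.1 • b i)ᵀ
    (p.2 i • (1 : Matrix (Fin 1) (Fin 1) ℝ))

lemma dil_decomp {g n : ℕ} (X : Fin g → Matrix (Fin n) (Fin n) ℝ)
    (b : Fin g → Matrix (Fin n) (Fin 1) ℝ) (p : ℝ × (Fin g → ℝ)) (i : Fin g) :
    dil X b p i = Matrix.fromBlocks (X i) 0 0 0
      + p.1 • Matrix.fromBlocks 0 (b i) (b i)ᵀ 0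
      + p.2 i • Matrix.fromBlocks 0 0 0 (1 : Matrix (Fin 1) (Fin 1) ℝ) := by
  simp only [dil, Matrix.fromBlocks_smul, Matrix.fromBlocks_add, Matrix.transpose_smul,
    add_zero, zero_add, smul_zero]

lemma LA_dil_decomp {g d n : ℕ} (A : Fin g → Matrix (Fin d) (Fin d) ℝ)
    (X : Fin g → Matrix (Fin n) (Fin n) ℝ)
    (b : Fin g → Matrix (Fin n) (Fin 1) ℝ) (p : ℝ × (Fin g → ℝ)) :
    LA A (dil X b p) = LA A (fun i => Matrix.fromBlocks (X i) 0 0 0)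
      - p.1 • (∑ i, A i ⊗ₖ Matrix.fromBlocks 0 (b i) (b i)ᵀ 0)
      - ∑ i, p.2 i • (A i ⊗ₖ Matrix.fromBlocks 0 0 0 (1 : Matrix (Fin 1) (Fin 1) ℝ)) := by
  simp only [LA]
  have : ∀ i, A i ⊗ₖ dil X b p i
      = A i ⊗ₖ Matrix.fromBlocks (X i) 0 0 0
        + p.1 • (A i ⊗ₖ Matrix.fromBlocks 0 (b i) (b i)ᵀ 0)
        + p.2 i • (A i ⊗ₖ Matrix.fromBlocks 0 0 0 (1 : Matrix (Fin 1) (Fin 1) ℝ)) := by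
    intro i
    rw [dil_decomp, Matrix.kronecker_add, Matrix.kronecker_add,
      Matrix.kronecker_smul, Matrix.kronecker_smul]
  simp only [this, Finset.sum_add_distrib, ← Finset.smul_sum]
  abel

lemma LA_isHermitian {g : ℕ} {D m : Type*} [Fintype D] [Fintype m] [DecidableEq D] [DecidableEq m]
    (A : Fin g → Matrix D D ℝ) (hA : ∀ i, (A i).IsSymm)
    (Z : Fin g → Matrix m m ℝ) (hZ : ∀ i, (Z i).IsSymm) : (LA A Z).IsHermitian := by
  rw [Matrix.IsHermitian, Matrix.conjTranspose_eq_transpose_of_trivial, LA,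
    Matrix.transpose_sub, Matrix.transpose_one, Matrix.transpose_sum]
  congr 1
  congr 1
  funext i
  rw [← Matrix.kroneckerMap_transpose, hA i, hZ i]

lemma dil_isSymm {g n : ℕ} (X : Fin g → Matrix (Fin n) (Fin n) ℝ)
    (hX : ∀ i, (X i).IsSymm)
    (b : Fin g → Matrix (Fin n) (Fin 1) ℝ) (p : ℝ × (Fin g → ℝ)) (i : Fin g) :
    (dil X b p i).IsSymm := by
  rw [Matrix.IsSymm, dil, Matrix.fromBlocks_transpose, Matrix.transpose_transpose, hX i]
  have : (p.2 i • (1 : Matrix (Fin 1) (Fin 1) ℝ))ᵀ = p.2 i • 1 := by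
    rw [Matrix.transpose_smul, Matrix.transpose_one]
  rw [this]

lemma quadform_cont {g d n : ℕ} (A : Fin g → Matrix (Fin d) (Fin d) ℝ)
    (X : Fin g → Matrix (Fin n) (Fin n) ℝ)
    (b : Fin g → Matrix (Fin n) (Fin 1) ℝ) (x : Fin d × (Fin n ⊕ Fin 1) → ℝ) :
    Continuous fun p : ℝ × (Fin g → ℝ) => x ⬝ᵥ (LA A (dil X b p)) *ᵥ x := by
  have hentry : ∀ u v, Continuous fun p : ℝ × (Fin g → ℝ) => (LA A (dil X b p)) u v := by
    intro u v
    simp only [LA_dil_decomp, Matrix.sub_apply, Matrix.smul_apply, Matrix.sum_apply,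
      smul_eq_mul]
    fun_prop
  simp only [dotProduct, Matrix.mulVec]
  refine continuous_finset_sum _ fun u _ => Continuous.mul continuous_const ?_
  exact continuous_finset_sum _ fun v _ => (hentry u v).mul continuous_const

lemma bound_lemma {g d n : ℕ} (A : Fin g → Matrix (Fin d) (Fin d) ℝ)
    (X : Fin g → Matrix (Fin n) (Fin n) ℝ) (b : Fin g → Matrix (Fin n) (Fin 1) ℝ)
    {C : ℝ}
    (hCb : ∀ (m : ℕ) (Z : Fin g → Matrix (Fin m) (Fin m) ℝ),
      InDA A Z → (C • (1 : Matrix (Fin m) (Fin m) ℝ) - ∑ i, Z i * Z i).PosSemidef)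
    (p : ℝ × (Fin g → ℝ)) (h : InDA A (dil X b p)) :
    p.1 ^ 2 * (∑ i, ∑ r, (b i r 0) ^ 2) + ∑ i, (p.2 i) ^ 2 ≤ C := by
  set e : Fin (n + 1) → Fin n ⊕ Fin 1 := ⇑finSumFinEquiv.symm with he
  have hZ := InDA_submatrix A (dil X b p) e finSumFinEquiv.symm.injective h
  have hP := hCb (n + 1) _ hZ
  set j1 : Fin (n + 1) := finSumFinEquiv (Sum.inr 0) with hj1
  have hd : 0 ≤ (C • (1 : Matrix (Fin (n+1)) (Fin (n+1)) ℝ)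
      - ∑ i, ((dil X b p i).submatrix e e * (dil X b p i).submatrix e e)) j1 j1 := by
    have := hP.dotProduct_mulVec_nonneg (Pi.single j1 1)
    simpa [Matrix.mulVec_single, single_dotProduct] using this
  have hdiag : ∀ i : Fin g,
      ((dil X b p i).submatrix e e * (dil X b p i).submatrix e e) j1 j1
        = p.1 ^ 2 * (∑ r, (b i r 0) ^ 2) + (p.2 i) ^ 2 := by
    intro i
    rw [Matrix.mul_apply]
    have hej1 : e j1 = Sum.inr 0 := by simp [he, hj1]
    calc ∑ k, (dil X b p i).submatrix e e j1 k * (dil X b p i).submatrix e e k j1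
        = ∑ y : Fin n ⊕ Fin 1, dil X b p i (Sum.inr 0) y * dil X b p i y (Sum.inr 0) := by
          rw [← Equiv.sum_comp (finSumFinEquiv.symm)
            (fun y => dil X b p i (Sum.inr 0) y * dil X b p i y (Sum.inr 0))]
          simp only [Matrix.submatrix_apply, he, Equiv.symm_apply_apply, hj1]
      _ = p.1 ^ 2 * (∑ r, (b i r 0) ^ 2) + (p.2 i) ^ 2 := by
          rw [Fintype.sum_sum_type]
          simp [dil, Matrix.one_apply, Finset.mul_sum]
          refine congrArg₂ (· + ·) (Finset.sum_congr rfl fun r _ => by ring) (by ring)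
  rw [Matrix.sub_apply, Matrix.sum_apply] at hd
  simp only [hdiag, Matrix.smul_apply, Matrix.one_apply_eq, smul_eq_mul, mul_one] at hd
  rw [Finset.sum_add_distrib, ← Finset.mul_sum] at hd
  linarith

lemma ker_lemma {g d n : ℕ} (A : Fin g → Matrix (Fin d) (Fin d) ℝ)
    (X : Fin g → Matrix (Fin n) (Fin n) ℝ) (b : Fin g → Matrix (Fin n) (Fin 1) ℝ)
    (p : ℝ × (Fin g → ℝ)) (hp1 : p.1 = 1)
    (h : (LA A (dil X b p)).PosSemidef)
    (v : Fin d × Fin n → ℝ) (hv : (LA A X) *ᵥ v = 0) :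
    (∑ i, A i ⊗ₖ (b i)ᵀ) *ᵥ v = 0 := by
  set L := LA A (dil X b p) with hL
  set w : Fin d × (Fin n ⊕ Fin 1) → ℝ :=
    fun q => Sum.elim (fun r => v (q.1, r)) (fun _ => 0) q.2 with hw
  have key1 : ∀ (q : Fin d) (r : Fin n),
      (L *ᵥ w) (q, Sum.inl r) = ((LA A X) *ᵥ v) (q, r) := by
    intro q r
    simp only [hL, hw, LA, Matrix.mulVec, dotProduct, Fintype.sum_prod_type,
      Fintype.sum_sum_type, Matrix.sub_apply, Matrix.sum_apply, Matrix.one_apply,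
      Matrix.kroneckerMap_apply, dil, Matrix.fromBlocks_apply₁₁, Matrix.fromBlocks_apply₁₂,
      Sum.elim_inl, Sum.elim_inr, Prod.mk.injEq, Sum.inl.injEq, mul_zero, Finset.sum_const_zero,
      add_zero]
  have key2 : ∀ (q : Fin d) (t : Fin 1),
      (L *ᵥ w) (q, Sum.inr t) = -(((∑ i, A i ⊗ₖ (b i)ᵀ) *ᵥ v) (q, t)) := by
    intro q t
    simp only [hL, hw, LA, Matrix.mulVec, dotProduct, Fintype.sum_prod_type,
      Fintype.sum_sum_type, Matrix.sub_apply, Matrix.sum_apply, Matrix.one_apply,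
      Matrix.kroneckerMap_apply, dil, Matrix.fromBlocks_apply₂₁, Matrix.fromBlocks_apply₂₂,
      Sum.elim_inl, Sum.elim_inr, Prod.mk.injEq, mul_zero, Finset.sum_const_zero, add_zero,
      Matrix.transpose_apply, Matrix.smul_apply, smul_eq_mul, hp1, one_mul]
    have hfalse : ∀ (x : Fin d) (r : Fin n),
        (if q = x ∧ Sum.inr t = Sum.inl r then (1:ℝ) else 0) = 0 := by
      intro x r; simp
    simp only [hfalse, zero_sub, neg_mul, Finset.sum_neg_distrib]
  have hquad : w ⬝ᵥ L *ᵥ w = 0 := by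
    rw [dotProduct, Fintype.sum_prod_type]
    refine Finset.sum_eq_zero fun q _ => ?_
    rw [Fintype.sum_sum_type]
    have h1 : ∀ r : Fin n, w (q, Sum.inl r) * (L *ᵥ w) (q, Sum.inl r) = 0 := by
      intro r; rw [key1, hv]; simp
    have h2 : ∀ t : Fin 1, w (q, Sum.inr t) * (L *ᵥ w) (q, Sum.inr t) = 0 := by
      intro t; simp [hw]
    simp [h1, h2]
  have hzero : L *ᵥ w = 0 := by
    rw [← h.dotProduct_mulVec_zero_iff w]
    simpa using hquad
  funext qt
  obtain ⟨q, t⟩ := qt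
  have := congrFun hzero (q, Sum.inr t)
  rw [key2] at this
  simpa [neg_eq_zero] using this

/-- if `D_A` is bounded and `X ∈ D_A(n)` is not Arveson extreme, a
maximal 1-dilation of `X` exists: a nonzero `β` with `ker L_A(X) ⊆ ker Λ_A(βᵀ)` and a
strictly positive `c` attaining the maximum of all `α` admitting a dilation
`[[X, αβ],[αβᵀ, γ]] ∈ D_A(n+1)`. -/
theorem maximal_one_dilation_exists {g d n : ℕ}
    (A : Fin g → Matrix (Fin d) (Fin d) ℝ) (hA : ∀ i, (A i).IsSymm)
    (hbdd : ∃ C : ℝ, 0 < C ∧ ∀ (m : ℕ) (Z : Fin g → Matrix (Fin m) (Fin m) ℝ),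
      InDA A Z → (C • (1 : Matrix (Fin m) (Fin m) ℝ) - ∑ i, Z i * Z i).PosSemidef)
    (X : Fin g → Matrix (Fin n) (Fin n) ℝ) (hX : InDA A X)
    (hnotArv : ¬ IsArvExt A X) :
    ∃ β : Fin g → Matrix (Fin n) (Fin 1) ℝ, β ≠ 0 ∧
      LinearMap.ker (LA A X).mulVecLin ≤
        LinearMap.ker (∑ i, A i ⊗ₖ (β i)ᵀ).mulVecLin ∧
      ∃ c : ℝ, 0 < c ∧
        (∃ γ : Fin g → ℝ, InDA A (fun i => Matrix.fromBlocks (X i) (c • β i)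
          (c • β i)ᵀ (γ i • (1 : Matrix (Fin 1) (Fin 1) ℝ)))) ∧
        ∀ α : ℝ, (∃ γ : Fin g → ℝ, InDA A (fun i => Matrix.fromBlocks (X i) (α • β i)
          (α • β i)ᵀ (γ i • (1 : Matrix (Fin 1) (Fin 1) ℝ)))) → α ≤ c := by
  obtain ⟨C, hC, hCb⟩ := hbdd
  have h1 : ∃ (k : ℕ) (β₀ : Fin g → Matrix (Fin n) (Fin k) ℝ)
      (γ₀ : Fin g → Matrix (Fin k) (Fin k) ℝ),
      InDA A (fun i => Matrix.fromBlocks (X i) (β₀ i) (β₀ i)ᵀ (γ₀ i)) ∧ β₀ ≠ 0 := by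
    have h1 : ¬ ∀ (k : ℕ) (β : Fin g → Matrix (Fin n) (Fin k) ℝ)
        (γ : Fin g → Matrix (Fin k) (Fin k) ℝ),
        InDA A (fun i => Matrix.fromBlocks (X i) (β i) (β i)ᵀ (γ i)) → β = 0 :=
      fun h => hnotArv ⟨hX, h⟩
    push_neg at h1
    obtain ⟨k, β₀, γ₀, hd, hb0⟩ := h1
    exact ⟨k, β₀, γ₀, hd, hb0⟩
  obtain ⟨k, β₀, γ₀, hdil0, hb0⟩ := h1
  obtain ⟨i₀, r₀, j₀, hne⟩ : ∃ i r j, β₀ i r j ≠ 0 := by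
    by_contra hcon
    push_neg at hcon
    exact hb0 (funext fun i => Matrix.ext fun r j => hcon i r j)
  set b : Fin g → Matrix (Fin n) (Fin 1) ℝ := fun i => Matrix.of fun r _ => β₀ i r j₀ with hb
  set γ1 : Fin g → ℝ := fun i => γ₀ i j₀ j₀ with hγ1
  set π : Fin n ⊕ Fin 1 → Fin n ⊕ Fin k := Sum.map id (fun _ => j₀) with hπdef
  have hπ : Function.Injective π := by
    intro x y hxy
    cases x <;> cases y <;> simp_all [hπdef, Sum.map] <;>
      exact Subsingleton.elim _ _
  have hcomp : (fun i => (Matrix.fromBlocks (X i) (β₀ i) (β₀ i)ᵀ (γ₀ i)).submatrix π π)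
      = dil X b (1, γ1) := by
    funext i
    ext x y
    cases x <;> cases y <;>
      simp [dil, hπdef, hb, hγ1, Matrix.one_apply, Fin.eq_zero]
  have hdil1 : InDA A (dil X b (1, γ1)) := by
    rw [← hcomp]
    exact InDA_submatrix A _ π hπ hdil0
  refine ⟨b, ?_, ?_, ?_⟩
  · intro h0
    apply hne
    have := congrFun (congrFun (congrFun h0 i₀) r₀) 0
    simpa [hb] using this
  · intro v hv
    rw [LinearMap.mem_ker, Matrix.mulVecLin_apply] at hv ⊢
    exact ker_lemma A X b (1, γ1) rfl hdil1.2 v hv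
  · set s : ℝ := ∑ i, ∑ r, (b i r 0) ^ 2 with hs
    have hspos : 0 < s := by
      have hb1 : b i₀ r₀ 0 ≠ 0 := by simpa [hb] using hne
      have h1 : (0:ℝ) < (b i₀ r₀ 0) ^ 2 := by positivity
      have h2 : (b i₀ r₀ 0) ^ 2 ≤ ∑ r, (b i₀ r 0) ^ 2 :=
        Finset.single_le_sum (f := fun r => (b i₀ r 0) ^ 2)
          (fun r _ => sq_nonneg _) (Finset.mem_univ r₀)
      have h3 : ∑ r, (b i₀ r 0) ^ 2 ≤ s :=
        Finset.single_le_sum (f := fun i => ∑ r, (b i r 0) ^ 2)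
          (fun i _ => Finset.sum_nonneg fun r _ => sq_nonneg _) (Finset.mem_univ i₀)
      linarith
    set R : ℝ := max (Real.sqrt (C / s)) (Real.sqrt C) with hR
    set T : Set (ℝ × (Fin g → ℝ)) := {p | (LA A (dil X b p)).PosSemidef} with hT
    have hmemT : ∀ p, p ∈ T ↔ InDA A (dil X b p) := fun p =>
      ⟨fun h => ⟨dil_isSymm X hX.1 b p, h⟩, And.right⟩
    have hclosed : IsClosed T := by
      have hTeq : T = ⋂ x, {p | 0 ≤ x ⬝ᵥ (LA A (dil X b p)) *ᵥ x} := by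
        ext p
        simp only [Set.mem_iInter, Set.mem_setOf_eq, hT]
        constructor
        · intro h x
          simpa using h.dotProduct_mulVec_nonneg x
        · intro h
          exact Matrix.PosSemidef.of_dotProduct_mulVec_nonneg (LA_isHermitian A hA _ (fun i => dil_isSymm X hX.1 b p i))
            (fun x => by simpa using h x)
      rw [hTeq]
      exact isClosed_iInter fun x => isClosed_le continuous_const (quadform_cont A X b x)
    have hsub : T ⊆ Set.Icc (-R) R ×ˢ Set.Icc (fun _ => -R) (fun _ => R) := by
      intro p hp
      have hb2 := bound_lemma A X b hCb p ((hmemT p).mp hp)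
      have h2sum : 0 ≤ ∑ i, (p.2 i) ^ 2 := Finset.sum_nonneg fun i _ => sq_nonneg _
      have hp1 : p.1 ^ 2 ≤ C / s := by
        rw [le_div_iff₀ hspos]
        linarith
      have hα : |p.1| ≤ R := by
        calc |p.1| = Real.sqrt (p.1 ^ 2) := (Real.sqrt_sq_eq_abs _).symm
        _ ≤ Real.sqrt (C / s) := Real.sqrt_le_sqrt hp1
        _ ≤ R := le_max_left _ _
      have hγi : ∀ i, |p.2 i| ≤ R := by
        intro i
        have hsq : (p.2 i) ^ 2 ≤ C := by
          have h4 : 0 ≤ p.1 ^ 2 * s := by positivity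
          have h5 : (p.2 i) ^ 2 ≤ ∑ j, (p.2 j) ^ 2 :=
            Finset.single_le_sum (f := fun j => (p.2 j) ^ 2)
              (fun j _ => sq_nonneg _) (Finset.mem_univ i)
          linarith
        calc |p.2 i| = Real.sqrt ((p.2 i) ^ 2) := (Real.sqrt_sq_eq_abs _).symm
        _ ≤ Real.sqrt C := Real.sqrt_le_sqrt hsq
        _ ≤ R := le_max_right _ _
      constructor
      · exact Set.mem_Icc.mpr (abs_le.mp hα)
      · refine Set.mem_Icc.mpr ⟨fun i => ?_, fun i => ?_⟩
        · exact (abs_le.mp (hγi i)).1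
        · exact (abs_le.mp (hγi i)).2
    have hcompact : IsCompact T :=
      IsCompact.of_isClosed_subset (isCompact_Icc.prod isCompact_Icc) hclosed hsub
    have hne' : (1, γ1) ∈ T := hdil1.2
    obtain ⟨p₀, hp₀, hmax⟩ := hcompact.exists_isMaxOn ⟨(1, γ1), hne'⟩
      continuous_fst.continuousOn
    have h1le : (1 : ℝ) ≤ p₀.1 := hmax hne'
    refine ⟨p₀.1, by linarith, ⟨p₀.2, ?_⟩, ?_⟩
    · exact (hmemT p₀).mp hp₀
    · rintro α ⟨γ, hγ⟩
      have hmem : (α, γ) ∈ T := by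
        rw [hmemT]
        exact hγ
      exact hmax hmem
end

section
/- Let D_A be a free spectrahedron defined by a tuple A of d×d real symmetric diagonal matrices (so D_A is a free polytope) and suppose X ∈ D_A(n) is an Arveson extreme point. Then gn ≤ k_{A,X}, where k_{A,X} = dim ker L_A(X). -/
open Matrix
open scoped Kronecker

/-- Cauchy–Schwarz for a PSD real matrix. -/
lemma psd_cs {m : Type*} [Fintype m] {M : Matrix m m ℝ} (hM : M.PosSemidef)
    (w x : m → ℝ) : (w ⬝ᵥ M.mulVec x)^2 ≤ (w ⬝ᵥ M.mulVec w) * (x ⬝ᵥ M.mulVec x) := by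
  have hsym : ∀ a b : m → ℝ, a ⬝ᵥ M.mulVec b = b ⬝ᵥ M.mulVec a := by
    intro a b
    rw [Matrix.dotProduct_mulVec, ← Matrix.mulVec_transpose]
    rw [show Mᵀ = M from by
      rw [← Matrix.conjTranspose_eq_transpose_of_trivial]; exact hM.1]
    exact dotProduct_comm _ _
  have key : ∀ t : ℝ, 0 ≤ (w ⬝ᵥ M.mulVec w) * (t * t) + (2 * (w ⬝ᵥ M.mulVec x)) * t
      + (x ⬝ᵥ M.mulVec x) := by
    intro t
    have h0 := hM.dotProduct_mulVec_nonneg (x + t • w)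
    simp only [star_trivial, Matrix.mulVec_add, Matrix.mulVec_smul, dotProduct_add,
      add_dotProduct, dotProduct_smul, smul_dotProduct, smul_eq_mul] at h0
    rw [hsym x w] at h0
    ring_nf at h0 ⊢
    linarith
  have hd := discrim_le_zero key
  rw [discrim] at hd
  nlinarith [hd]

/-- Scalar inequality used per block. -/
lemma key_scalar (p r q s ε : ℝ) (hp : 0 ≤ p) (hr : 0 ≤ r) (hq : q^2 ≤ r * p)
    (hεr : ε^2 * r ≤ 1) (hε : 0 ≤ ε) : 0 ≤ p + s^2 - 2*ε*s*q := by
  have h1 : (2*ε*s*q)^2 ≤ 4*(ε^2*r)*(s^2*p) := by nlinarith [sq_nonneg (ε*s)]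
  have h2 : 4*(ε^2*r)*(s^2*p) ≤ 4*(s^2*p) := by
    nlinarith [mul_nonneg (sq_nonneg s) hp]
  have h3 : 4*(s^2*p) ≤ (p+s^2)^2 := by nlinarith [sq_nonneg (p - s^2)]
  nlinarith [sq_nonneg (p + s^2 - 2*ε*s*q), sq_nonneg s, hp]

section Blocks
variable {g d : ℕ} {m : Type*} [Fintype m] [DecidableEq m]
variable {A : Fin g → Matrix (Fin d) (Fin d) ℝ}
variable (Y : Fin g → Matrix m m ℝ)

/-- Diagonal blocks of the pencil. -/
noncomputable def LAblk (A : Fin g → Matrix (Fin d) (Fin d) ℝ)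
    (Y : Fin g → Matrix m m ℝ) (j : Fin d) : Matrix m m ℝ :=
  1 - ∑ i, A i j j • Y i

lemma LA_entry (hA : ∀ i, (A i).IsDiag) (j j' : Fin d) (a a' : m) :
    LA A Y (j, a) (j', a') = if j = j' then LAblk A Y j a a' else 0 := by
  simp only [LA, LAblk, Matrix.sub_apply, Matrix.sum_apply, Matrix.kroneckerMap_apply,
    Matrix.one_apply, Matrix.smul_apply, smul_eq_mul]
  by_cases h : j = j'
  · subst h; simp [Prod.ext_iff]
  · simp [h, Prod.ext_iff, hA _ h]

lemma LA_mulVec (hA : ∀ i, (A i).IsDiag) (w : Fin d × m → ℝ) (j : Fin d) (a : m) :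
    (LA A Y).mulVec w (j, a) = (LAblk A Y j).mulVec (fun q => w (j, q)) a := by
  have : (LA A Y).mulVec w (j, a)
      = ∑ j' : Fin d, ∑ q : m, LA A Y (j, a) (j', q) * w (j', q) := by
    rw [Matrix.mulVec, dotProduct, Fintype.sum_prod_type]
  rw [this]
  simp_rw [LA_entry Y hA, ite_mul, zero_mul]
  rw [Finset.sum_comm]
  simp [Matrix.mulVec, dotProduct]

lemma LA_dot (hA : ∀ i, (A i).IsDiag) (w u : Fin d × m → ℝ) :
    w ⬝ᵥ (LA A Y).mulVec u
      = ∑ j, (fun q => w (j, q)) ⬝ᵥ (LAblk A Y j).mulVec (fun q => u (j, q)) := by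
  rw [dotProduct, Fintype.sum_prod_type]
  exact Finset.sum_congr rfl fun j _ => Finset.sum_congr rfl fun a _ => by
    rw [LA_mulVec Y hA u j a]

lemma LAblk_psd (hA : ∀ i, (A i).IsDiag) (hpsd : (LA A Y).PosSemidef) (j : Fin d) (x : m → ℝ) :
    0 ≤ x ⬝ᵥ (LAblk A Y j).mulVec x := by
  have h := hpsd.dotProduct_mulVec_nonneg (fun jp : Fin d × m => if jp.1 = j then x jp.2 else 0)
  rw [star_trivial, LA_dot Y hA] at h
  have he : ∀ j' : Fin d,
      ((fun q => if j' = j then x q else 0) ⬝ᵥ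
        (LAblk A Y j').mulVec (fun q => if j' = j then x q else 0))
      = if j' = j then x ⬝ᵥ (LAblk A Y j).mulVec x else 0 := by
    intro j'
    by_cases h' : j' = j
    · subst h'; simp
    · simp [h', dotProduct]
  simp_rw [he] at h
  simpa using h
end Blocks

section Herm
variable {g d : ℕ} {m : Type*} [Fintype m] [DecidableEq m]
variable {A : Fin g → Matrix (Fin d) (Fin d) ℝ} {Y : Fin g → Matrix m m ℝ}

lemma LA_isHermitian_s17 (hA : ∀ i, (A i).IsDiag) (hY : ∀ i, (Y i).IsSymm) :
    (LA A Y).IsHermitian := by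
  have hAt : ∀ i, (A i)ᵀ = A i := by
    intro i; ext j j'
    by_cases h : j = j'
    · subst h; rfl
    · rw [Matrix.transpose_apply, hA i h, hA i (Ne.symm h)]
  rw [Matrix.IsHermitian, Matrix.conjTranspose_eq_transpose_of_trivial, LA,
    Matrix.transpose_sub, Matrix.transpose_one, Matrix.transpose_sum]
  congr 1
  refine Finset.sum_congr rfl fun i _ => ?_
  rw [← Matrix.kroneckerMap_transpose, hAt i, hY i]

lemma block_form (P : Matrix m m ℝ) (v u : m → ℝ) (s : Fin 1 → ℝ) :
    Sum.elim u s ⬝ᵥ (Matrix.fromBlocks P (Matrix.of fun p (_ : Fin 1) => v p)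
        (Matrix.of fun (_ : Fin 1) p => v p) 1).mulVec (Sum.elim u s)
      = u ⬝ᵥ P.mulVec u + (s 0)^2 + 2 * (s 0) * (v ⬝ᵥ u) := by
  rw [Matrix.fromBlocks_mulVec, sumElim_dotProduct_sumElim]
  simp only [Sum.elim_comp_inl, Sum.elim_comp_inr]
  have hQ : (Matrix.of fun p (_ : Fin 1) => v p).mulVec s = fun p => v p * s 0 := by
    funext p; simp [Matrix.mulVec, dotProduct]
  have hR : (Matrix.of fun (_ : Fin 1) p => v p).mulVec u = fun _ => v ⬝ᵥ u := by
    funext c; simp [Matrix.mulVec, dotProduct]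
  rw [hQ, hR, Matrix.one_mulVec, dotProduct_add, dotProduct_add]
  have h1 : u ⬝ᵥ (fun p => v p * s 0) = s 0 * (v ⬝ᵥ u) := by
    simp only [dotProduct, Finset.mul_sum]
    exact Finset.sum_congr rfl fun p _ => by ring
  have h2 : s ⬝ᵥ (fun _ : Fin 1 => v ⬝ᵥ u) = s 0 * (v ⬝ᵥ u) := by
    simp [dotProduct]
  have h3 : s ⬝ᵥ s = s 0 ^ 2 := by simp [dotProduct, sq]
  rw [h1, h2, h3]
  ring
end Herm

lemma herm_dot_comm {m : Type*} [Fintype m] {M : Matrix m m ℝ} (hM : M.IsHermitian)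
    (a b : m → ℝ) : a ⬝ᵥ M.mulVec b = b ⬝ᵥ M.mulVec a := by
  rw [Matrix.dotProduct_mulVec, ← Matrix.mulVec_transpose]
  rw [show Mᵀ = M from by
    rw [← Matrix.conjTranspose_eq_transpose_of_trivial]; exact hM]
  exact dotProduct_comm _ _

section Blocks2
variable {g d : ℕ} {m : Type*} [Fintype m] [DecidableEq m]
variable {A : Fin g → Matrix (Fin d) (Fin d) ℝ} (Y : Fin g → Matrix m m ℝ)

lemma LAblk_isHermitian (hY : ∀ i, (Y i).IsSymm) (j : Fin d) :
    (LAblk A Y j).IsHermitian := by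
  rw [Matrix.IsHermitian, Matrix.conjTranspose_eq_transpose_of_trivial, LAblk,
    Matrix.transpose_sub, Matrix.transpose_one, Matrix.transpose_sum]
  congr 1
  refine Finset.sum_congr rfl fun i _ => ?_
  rw [Matrix.transpose_smul, hY i]

lemma LAblk_posSemidef (hA : ∀ i, (A i).IsDiag) (hY : ∀ i, (Y i).IsSymm)
    (hpsd : (LA A Y).PosSemidef) (j : Fin d) : (LAblk A Y j).PosSemidef := by
  refine .of_dotProduct_mulVec_nonneg (LAblk_isHermitian Y hY j) fun x => ?_
  simpa using LAblk_psd Y hA hpsd j x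

/-- The linear map `β ↦ Λ_A(β)` on block-diagonal data. -/
def PsiMap (A : Fin g → Matrix (Fin d) (Fin d) ℝ) {n : ℕ} :
    ((Fin g × Fin n) → ℝ) →ₗ[ℝ] ((Fin d × Fin n) → ℝ) where
  toFun := fun b jp => ∑ i, A i jp.1 jp.1 * b (i, jp.2)
  map_add' := by
    intro b c; funext jp
    simp [mul_add, Finset.sum_add_distrib]
  map_smul' := by
    intro t b; funext jp
    simp [Finset.mul_sum, mul_left_comm]
end Blocks2

/-- for a free polytope (defining tuple of diagonal matrices), an
Arveson extreme point `X ∈ D_A(n)` satisfies `gn ≤ dim ker L_A(X)`. -/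
theorem free_polytope_arveson_kernel_count {g d n : ℕ}
    (A : Fin g → Matrix (Fin d) (Fin d) ℝ) (hA : ∀ i, (A i).IsDiag)
    (X : Fin g → Matrix (Fin n) (Fin n) ℝ) (hX : IsArvExt A X) :
    g * n ≤ Module.finrank ℝ (LinearMap.ker (LA A X).mulVecLin) := by
  classical
  obtain ⟨⟨hXsymm, hXpsd⟩, hExt⟩ := hX
  set R : Submodule ℝ ((Fin d × Fin n) → ℝ) := LinearMap.range (LA A X).mulVecLin with hRdef
  have hinj : Function.Injective (R.mkQ.comp (PsiMap A (n := n))) := by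
    rw [injective_iff_map_eq_zero]
    intro b hb
    have hmem : PsiMap A b ∈ R := by
      rwa [LinearMap.comp_apply, Submodule.mkQ_apply, Submodule.Quotient.mk_eq_zero] at hb
    obtain ⟨w, hw⟩ := hmem
    rw [Matrix.mulVecLin_apply] at hw
    -- hw : (LA A X).mulVec w = PsiMap A b
    have hr0 : 0 ≤ w ⬝ᵥ (LA A X).mulVec w := by simpa using hXpsd.dotProduct_mulVec_nonneg w
    set r : ℝ := w ⬝ᵥ (LA A X).mulVec w with hrdef
    set ε : ℝ := 1 / (1 + r) with hεdef
    have h1r : 0 < 1 + r := by linarith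
    have hε0 : 0 < ε := by positivity
    have hrj : ∀ j, 0 ≤ (fun q => w (j,q)) ⬝ᵥ (LAblk A X j).mulVec (fun q => w (j,q)) :=
      fun j => LAblk_psd X hA hXpsd j _
    have hrsum : ∑ j, (fun q => w (j,q)) ⬝ᵥ (LAblk A X j).mulVec (fun q => w (j,q)) = r :=
      (LA_dot X hA w w).symm
    have hrle : ∀ j, (fun q => w (j,q)) ⬝ᵥ (LAblk A X j).mulVec (fun q => w (j,q)) ≤ r := by
      intro j
      rw [← hrsum]
      exact Finset.single_le_sum (fun j _ => hrj j) (Finset.mem_univ j)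
    have hεr : ∀ j, ε^2 * ((fun q => w (j,q)) ⬝ᵥ (LAblk A X j).mulVec (fun q => w (j,q))) ≤ 1 := by
      intro j
      have h1 : ε^2 * (1 + r)^2 = 1 := by
        rw [hεdef]; field_simp
      nlinarith [hrle j, hrj j, sq_nonneg ε, hr0]
    set β' : Fin g → Matrix (Fin n) (Fin 1) ℝ :=
      fun i => Matrix.of fun p (_ : Fin 1) => ε * b (i, p) with hβ'def
    set Y : Fin g → Matrix (Fin n ⊕ Fin 1) (Fin n ⊕ Fin 1) ℝ :=
      fun i => Matrix.fromBlocks (X i) (β' i) (β' i)ᵀ 0 with hYdef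
    have hYsymm : ∀ i, (Y i).IsSymm := by
      intro i
      show (Y i)ᵀ = Y i
      rw [hYdef]
      rw [Matrix.fromBlocks_transpose, Matrix.transpose_transpose, Matrix.transpose_zero,
        show (X i)ᵀ = X i from hXsymm i]
    have hYblk : ∀ j, LAblk A Y j = Matrix.fromBlocks (LAblk A X j)
        (Matrix.of fun p (_ : Fin 1) => -(ε * ∑ i, A i j j * b (i, p)))
        (Matrix.of fun (_ : Fin 1) p => -(ε * ∑ i, A i j j * b (i, p))) 1 := by
      intro j
      ext a a'
      cases a with
      | inl p =>
        cases a' with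
        | inl p' =>
          simp only [LAblk, hYdef, Matrix.sub_apply, Matrix.sum_apply, Matrix.smul_apply,
            Matrix.fromBlocks_apply₁₁, smul_eq_mul, Matrix.one_apply, Sum.inl.injEq]
        | inr c =>
          simp only [LAblk, hYdef, hβ'def, Matrix.sub_apply, Matrix.sum_apply, Matrix.smul_apply,
            Matrix.fromBlocks_apply₁₂, smul_eq_mul, Matrix.one_apply, Matrix.of_apply]
          rw [if_neg (by simp), Finset.mul_sum]
          rw [show ∑ i, ε * (A i j j * b (i, p)) = ∑ i, A i j j * (ε * b (i, p)) from
            Finset.sum_congr rfl fun i _ => by ring]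
          ring
      | inr c =>
        cases a' with
        | inl p' =>
          simp only [LAblk, hYdef, hβ'def, Matrix.sub_apply, Matrix.sum_apply, Matrix.smul_apply,
            Matrix.fromBlocks_apply₂₁, smul_eq_mul, Matrix.one_apply, Matrix.of_apply,
            Matrix.transpose_apply]
          rw [if_neg (by simp), Finset.mul_sum]
          rw [show ∑ i, ε * (A i j j * b (i, p')) = ∑ i, A i j j * (ε * b (i, p')) from
            Finset.sum_congr rfl fun i _ => by ring]
          ring
        | inr c' =>
          simp only [LAblk, hYdef, Matrix.sub_apply, Matrix.sum_apply, Matrix.smul_apply,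
            Matrix.fromBlocks_apply₂₂, smul_eq_mul, Matrix.one_apply, Matrix.zero_apply,
            Sum.inr.injEq, mul_zero]
          simp [Subsingleton.elim c c']
    have hNpsd : (LA A Y).PosSemidef := by
      refine .of_dotProduct_mulVec_nonneg (LA_isHermitian_s17 hA hYsymm) fun z => ?_
      rw [star_trivial, LA_dot Y hA]
      refine Finset.sum_nonneg fun j _ => ?_
      have hz : (fun a => z (j, a))
          = Sum.elim (fun p => z (j, Sum.inl p)) (fun c => z (j, Sum.inr c)) := by
        funext a; cases a <;> rfl
      rw [hz, hYblk j, block_form]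
      set uj : Fin n → ℝ := fun p => z (j, Sum.inl p)
      set wj : Fin n → ℝ := fun q => w (j, q)
      set s0 : ℝ := z (j, Sum.inr 0)
      have hc : (fun p => -(ε * ∑ i, A i j j * b (i, p)))
          = fun p => -(ε * (LAblk A X j).mulVec wj p) := by
        funext p
        rw [show (LAblk A X j).mulVec wj p = ∑ i, A i j j * b (i, p) from by
          rw [show (∑ i, A i j j * b (i, p)) = PsiMap A b (j, p) from rfl, ← hw,
            LA_mulVec X hA w j p]]
      have hdot : (fun p => -(ε * ∑ i, A i j j * b (i, p))) ⬝ᵥ uj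
          = -(ε * (wj ⬝ᵥ (LAblk A X j).mulVec uj)) := by
        rw [hc]
        rw [show wj ⬝ᵥ (LAblk A X j).mulVec uj = ((LAblk A X j).mulVec wj) ⬝ᵥ uj from by
          rw [herm_dot_comm (LAblk_isHermitian X hXsymm j) wj uj, dotProduct_comm]]
        simp only [dotProduct, Finset.mul_sum, ← Finset.sum_neg_distrib]
        exact Finset.sum_congr rfl fun p _ => by ring
      rw [hdot]
      have hcs := psd_cs (LAblk_posSemidef X hA hXsymm hXpsd j) wj uj
      have huj0 : 0 ≤ uj ⬝ᵥ (LAblk A X j).mulVec uj := LAblk_psd X hA hXpsd j uj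
      have hks := key_scalar (uj ⬝ᵥ (LAblk A X j).mulVec uj)
        (wj ⬝ᵥ (LAblk A X j).mulVec wj) (wj ⬝ᵥ (LAblk A X j).mulVec uj) s0 ε
        huj0 (hrj j) hcs (hεr j) hε0.le
      nlinarith [hks]
    have hb0 := hExt 1 β' (fun _ => 0) ⟨hYsymm, hNpsd⟩
    funext ip
    have := congrFun (congrFun (congrFun hb0 ip.1) ip.2) 0
    have hεb : ε * b (ip.1, ip.2) = 0 := by simpa [hβ'def] using this
    have : b (ip.1, ip.2) = 0 := by
      rcases mul_eq_zero.mp hεb with h | h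
      · exact absurd h hε0.ne'
      · exact h
    simpa using this
  have hle := LinearMap.finrank_le_finrank_of_injective hinj
  have hdom : Module.finrank ℝ ((Fin g × Fin n) → ℝ) = g * n := by
    rw [Module.finrank_pi]; simp
  have e1 := Submodule.finrank_quotient_add_finrank R
  have e2 := LinearMap.finrank_range_add_finrank_ker (LA A X).mulVecLin
  rw [hdom] at hle
  rw [← hRdef] at e2
  omega
end
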